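/- arXiv:2102.13612 — 6 statements merged into one kernel-verified Lean document; each statement's English description precedes it below -/
import Mathlib

section
/- Every nonzero element of the inverse hull H(S_T) can be written in the form θ_s ∘ θ_{x_1}^{-1}θ_{x_1} ∘ ⋯ ∘ θ_{x_n}^{-1}θ_{x_n} ∘ θ_w^{-1} for some n ≥ 1, letters x_i ∈ A, and s, w ∈ L_T ∪ {1} (where θ_1 denotes the identity map on L_T). -/
def IsWord {A : Type} (T : A → A → Prop) (w : List A) : Prop := w ≠ [] ∧ w.Chain' T

def PMap (A : Type) := List A → Option (List A)

def pzero {A : Type} : PMap A := fun _ => none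

def pcomp {A : Type} (f g : PMap A) : PMap A := fun x => (g x).bind f

open Classical in
noncomputable def pinv {A : Type} (f : PMap A) : PMap A := fun y =>
  if h : ∃ x, f x = some y then some h.choose else none

open Classical in
noncomputable def theta {A : Type} (T : A → A → Prop) (w : List A) : PMap A := fun x =>
  if IsWord T x ∧ IsWord T (w ++ x) then some (w ++ x) else none

open Classical in
noncomputable def pid {A : Type} (T : A → A → Prop) : PMap A := fun x =>
  if IsWord T x then some x else none

noncomputable def idemL {A : Type} (T : A → A → Prop) (a : A) : PMap A :=
  pcomp (pinv (theta T [a])) (theta T [a])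

noncomputable def rgIdem {A : Type} (T : A → A → Prop) (a : A) : PMap A :=
  pcomp (theta T [a]) (pinv (theta T [a]))

noncomputable def prodIdems {A : Type} (T : A → A → Prop) (xs : List A) : PMap A :=
  (xs.map (idemL T)).foldr pcomp (pid T)

def pdom {A : Type} (f : PMap A) : Set (List A) := {x | f x ≠ none}

inductive Hull {A : Type} (T : A → A → Prop) : PMap A → Prop
  | gen {w : List A} : IsWord T w → Hull T (theta T w)
  | zero : Hull T pzero
  | comp {f g : PMap A} : Hull T f → Hull T g → Hull T (pcomp f g)
  | inv {f : PMap A} : Hull T f → Hull T (pinv f)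

open Classical in
noncomputable def smul {A : Type} (T : A → A → Prop) :
    Option (List A) → Option (List A) → Option (List A)
  | some u, some v => if IsWord T (u ++ v) then some (u ++ v) else none
  | _, _ => none

namespace S6

variable {A : Type} (T : A → A → Prop)

/-- head condition -/
def HdC (xs z : List A) : Prop := ∀ a ∈ xs, ∀ b ∈ z.head?, T a b

open Classical in
noncomputable def NF (s xs w : List A) : PMap A := fun y =>
  if w <+: y ∧ IsWord T y ∧ IsWord T (y.drop w.length) ∧ HdC T xs (y.drop w.length)
      ∧ IsWord T (s ++ y.drop w.length)
  then some (s ++ y.drop w.length) else none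

variable {T}

lemma pcomp_eq_some {f g : PMap A} {y u : List A} :
    pcomp f g y = some u ↔ ∃ m, g y = some m ∧ f m = some u := by
  unfold pcomp; cases g y <;> simp [Option.bind]

lemma ext_some {f g : PMap A} (h : ∀ y u, f y = some u ↔ g y = some u) : f = g := by
  funext y
  cases hf : f y with
  | none =>
    cases hg : g y with
    | none => rfl
    | some u => exact absurd ((h y u).mpr hg) (by simp [hf])
  | some u => exact ((h y u).mp hf).symm

lemma eq_pzero {f : PMap A} (h : ∀ y u, f y ≠ some u) : f = pzero := by
  funext y
  cases hf : f y with
  | none => rfl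
  | some u => exact absurd hf (h y u)

lemma NF_eq_some {s xs w y u : List A} :
    NF T s xs w y = some u ↔ ∃ z, y = w ++ z ∧ u = s ++ z ∧ IsWord T (w ++ z) ∧
      IsWord T z ∧ HdC T xs z ∧ IsWord T (s ++ z) := by
  unfold NF
  split
  case isTrue h =>
    obtain ⟨⟨z, hz⟩, h2, h3, h4, h5⟩ := h
    subst hz
    rw [List.drop_left] at *
    constructor
    · rintro h
      exact ⟨z, rfl, (Option.some_inj.mp h).symm, h2, h3, h4, h5⟩
    · rintro ⟨z', hz', hu, -⟩
      obtain rfl := List.append_cancel_left hz'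
      rw [hu]
  case isFalse h =>
    constructor
    · rintro ⟨⟩
    · rintro ⟨z, rfl, rfl, h2, h3, h4, h5⟩
      refine absurd ⟨⟨z, rfl⟩, h2, ?_, ?_, ?_⟩ h <;> rw [List.drop_left] <;> assumption

lemma theta_eq_some {v x u : List A} :
    theta T v x = some u ↔ IsWord T x ∧ IsWord T (v ++ x) ∧ u = v ++ x := by
  unfold theta
  split
  case isTrue h => simp [h, eq_comm]
  case isFalse h =>
    constructor
    · rintro ⟨⟩
    · rintro ⟨h1, h2, rfl⟩; exact absurd ⟨h1, h2⟩ h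

lemma pinv_eq_some {f : PMap A}
    (hf : ∀ x₁ x₂ u, f x₁ = some u → f x₂ = some u → x₁ = x₂) {u x : List A} :
    pinv f u = some x ↔ f x = some u := by
  unfold pinv
  split
  case isTrue h =>
    have hc := h.choose_spec
    constructor
    · rintro hx
      obtain rfl := Option.some_inj.mp hx
      exact hc
    · intro hx
      rw [hf _ _ _ hc hx]
  case isFalse h =>
    constructor
    · rintro ⟨⟩
    · intro hx; exact absurd ⟨x, hx⟩ h

lemma NF_inj {s xs w : List A} : ∀ x₁ x₂ u, NF T s xs w x₁ = some u →
    NF T s xs w x₂ = some u → x₁ = x₂ := by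
  intro x₁ x₂ u h1 h2
  obtain ⟨z, rfl, rfl, -⟩ := NF_eq_some.mp h1
  obtain ⟨z', rfl, hz', -⟩ := NF_eq_some.mp h2
  obtain rfl := List.append_cancel_left hz'
  rfl

lemma pinv_NF {s xs w : List A} : pinv (NF T s xs w) = NF T w xs s := by
  apply ext_some
  intro y u
  rw [pinv_eq_some NF_inj, NF_eq_some, NF_eq_some]
  constructor
  · rintro ⟨z, rfl, rfl, h2, h3, h4, h5⟩
    exact ⟨z, rfl, rfl, h5, h3, h4, h2⟩
  · rintro ⟨z, rfl, rfl, h2, h3, h4, h5⟩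
    exact ⟨z, rfl, rfl, h5, h3, h4, h2⟩

lemma pinv_pzero : pinv (pzero : PMap A) = pzero := by
  apply eq_pzero
  intro y u h
  rw [pinv_eq_some (by rintro x₁ x₂ v ⟨⟩)] at h
  exact nomatch (h : none = some _)

lemma pcomp_pzero_left {g : PMap A} : pcomp pzero g = pzero := by
  apply eq_pzero
  intro y u h
  obtain ⟨m, -, hm⟩ := pcomp_eq_some.mp h
  exact nomatch (hm : none = some _)

lemma pcomp_pzero_right {f : PMap A} : pcomp f pzero = pzero := rfl

lemma pinv_pcomp {f g : PMap A}
    (hf : ∀ x₁ x₂ u, f x₁ = some u → f x₂ = some u → x₁ = x₂)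
    (hg : ∀ x₁ x₂ u, g x₁ = some u → g x₂ = some u → x₁ = x₂) :
    pinv (pcomp f g) = pcomp (pinv g) (pinv f) := by
  have hfg : ∀ x₁ x₂ u, pcomp f g x₁ = some u → pcomp f g x₂ = some u → x₁ = x₂ := by
    intro x₁ x₂ u h1 h2
    obtain ⟨m1, hg1, hf1⟩ := pcomp_eq_some.mp h1
    obtain ⟨m2, hg2, hf2⟩ := pcomp_eq_some.mp h2
    obtain rfl := hf _ _ _ hf1 hf2
    exact hg _ _ _ hg1 hg2
  apply ext_some
  intro y u
  rw [pinv_eq_some hfg, pcomp_eq_some, pcomp_eq_some]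
  constructor
  · rintro ⟨m, hgm, hfm⟩
    exact ⟨m, (pinv_eq_some hf).mpr hfm, (pinv_eq_some hg).mpr hgm⟩
  · rintro ⟨m, hm1, hm2⟩
    exact ⟨m, (pinv_eq_some hg).mp hm2, (pinv_eq_some hf).mp hm1⟩

lemma isWord_append {u z : List A} (hz : z ≠ []) :
    IsWord T (u ++ z) ↔ List.Chain' T u ∧ IsWord T z ∧
      ∀ c ∈ u.getLast?, ∀ b ∈ z.head?, T c b := by
  unfold IsWord List.Chain'
  rw [List.isChain_append]
  constructor
  · rintro ⟨-, h1, h2, h3⟩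
    exact ⟨h1, ⟨hz, h2⟩, h3⟩
  · rintro ⟨h1, ⟨-, h2⟩, h3⟩
    exact ⟨by simp [hz], h1, h2, h3⟩

lemma theta_inj {v : List A} : ∀ x₁ x₂ u, theta T v x₁ = some u →
    theta T v x₂ = some u → x₁ = x₂ := by
  intro x₁ x₂ u h1 h2
  obtain ⟨-, -, rfl⟩ := theta_eq_some.mp h1
  obtain ⟨-, -, h⟩ := theta_eq_some.mp h2
  exact List.append_cancel_left h

lemma idemL_eq_some {a : A} {x u : List A} :
    idemL T a x = some u ↔ IsWord T x ∧ (∀ b ∈ x.head?, T a b) ∧ u = x := by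
  unfold idemL
  rw [pcomp_eq_some]
  constructor
  · rintro ⟨m, hm1, hm2⟩
    obtain ⟨h1, h2, rfl⟩ := theta_eq_some.mp hm1
    have h3 := theta_eq_some.mp ((pinv_eq_some theta_inj).mp hm2)
    obtain rfl : u = x := List.append_cancel_left h3.2.2.symm
    have := (isWord_append (T := T) h1.1).mp h2
    exact ⟨h1, fun b hb => this.2.2 a rfl b hb, rfl⟩
  · rintro ⟨h1, h2, rfl⟩
    have hax : IsWord T ([a] ++ u) := by
      rw [isWord_append h1.1]
      exact ⟨List.isChain_singleton a, h1, by simpa using h2⟩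
    refine ⟨[a] ++ u, theta_eq_some.mpr ⟨h1, hax, rfl⟩,
      (pinv_eq_some theta_inj).mpr (theta_eq_some.mpr ⟨h1, hax, rfl⟩)⟩

lemma prodIdems_eq_some {xs x u : List A} :
    prodIdems T xs x = some u ↔ IsWord T x ∧ HdC T xs x ∧ u = x := by
  induction xs generalizing u with
  | nil =>
    unfold prodIdems pid
    change (open Classical in if IsWord T x then some x else none) = some u ↔ _
    split
    case isTrue h => simp [HdC, h, eq_comm]
    case isFalse h =>
      constructor
      · rintro ⟨⟩
      · rintro ⟨h1, -, -⟩; exact absurd h1 h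
  | cons a xs ih =>
    show pcomp (idemL T a) (prodIdems T xs) x = some u ↔ _
    rw [pcomp_eq_some]
    constructor
    · rintro ⟨m, hm1, hm2⟩
      obtain ⟨h1, h2, rfl⟩ := ih.mp hm1
      obtain ⟨h3, h4, rfl⟩ := idemL_eq_some.mp hm2
      exact ⟨h1, by
        intro c hc
        rcases List.mem_cons.mp hc with rfl | hc
        · exact h4
        · exact h2 c hc, rfl⟩
    · rintro ⟨h1, h2, rfl⟩
      exact ⟨_, ih.mpr ⟨h1, fun c hc => h2 c (List.mem_cons_of_mem a hc), rfl⟩,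
        idemL_eq_some.mpr ⟨h1, h2 a List.mem_cons_self, rfl⟩⟩

lemma NF_spec {s xs w : List A} :
    NF T s xs w = pcomp (theta T s) (pcomp (prodIdems T xs) (pinv (theta T w))) := by
  apply ext_some
  intro y u
  rw [NF_eq_some, pcomp_eq_some]
  constructor
  · rintro ⟨z, rfl, rfl, h2, h3, h4, h5⟩
    refine ⟨z, pcomp_eq_some.mpr ⟨z, ?_, ?_⟩, theta_eq_some.mpr ⟨h3, h5, rfl⟩⟩
    · exact (pinv_eq_some theta_inj).mpr (theta_eq_some.mpr ⟨h3, h2, rfl⟩)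
    · exact prodIdems_eq_some.mpr ⟨h3, h4, rfl⟩
  · rintro ⟨m, hm1, hm2⟩
    obtain ⟨z, hz1, hz2⟩ := pcomp_eq_some.mp hm1
    clear hm1
    obtain ⟨h3, h2, rfl⟩ := theta_eq_some.mp ((pinv_eq_some theta_inj).mp hz1)
    obtain ⟨-, h4, rfl⟩ := prodIdems_eq_some.mp hz2
    obtain ⟨-, h5, rfl⟩ := theta_eq_some.mp hm2
    exact ⟨_, rfl, rfl, h2, h3, h4, h5⟩

lemma theta_eq_NF {v : List A} (hv : IsWord T v) :
    theta T v = NF T v [v.getLast hv.1] [] := by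
  apply ext_some
  intro y u
  rw [theta_eq_some, NF_eq_some]
  constructor
  · rintro ⟨h1, h2, rfl⟩
    refine ⟨y, by simp, rfl, by simpa using h1, h1, ?_, h2⟩
    intro c hc b hb
    obtain rfl : c = v.getLast hv.1 := by simpa using hc
    have := (isWord_append (T := T) h1.1).mp h2
    exact this.2.2 _ (by rw [List.getLast?_eq_getLast hv.1]; rfl) b hb
  · rintro ⟨z, rfl, rfl, -, h3, h4, h5⟩
    refine ⟨by simpa using h3, ?_, by simp⟩
    rw [isWord_append h3.1]
    refine ⟨hv.2, h3, ?_⟩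
    intro c hc b hb
    rw [List.getLast?_eq_getLast hv.1] at hc
    obtain rfl : v.getLast hv.1 = c := by simpa using hc
    exact h4 _ (by simp) b hb

lemma HdC_append_right {xs t z : List A} (ht : t ≠ []) :
    HdC T xs (t ++ z) ↔ HdC T xs t := by
  cases t with
  | nil => exact absurd rfl ht
  | cons b t => simp [HdC]

lemma HdC_cons {a : A} {xs z : List A} :
    HdC T (a :: xs) z ↔ (∀ b ∈ z.head?, T a b) ∧ HdC T xs z := by
  simp [HdC, or_imp, forall_and]

lemma HdC_append_left {xs xs' z : List A} :
    HdC T (xs ++ xs') z ↔ HdC T xs z ∧ HdC T xs' z := by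
  simp [HdC, or_imp, forall_and]

lemma HdC_toList {o : Option A} {z : List A} :
    HdC T o.toList z ↔ ∀ c ∈ o, ∀ b ∈ z.head?, T c b := by
  cases o <;> simp [HdC]

lemma word_suffix {u t : List A} (h : List.Chain' T (u ++ t)) (ht : t ≠ []) :
    IsWord T t := ⟨ht, h.suffix ⟨u, rfl⟩⟩

lemma word_prefix {u t : List A} (h : List.Chain' T (u ++ t)) (hu : u ≠ []) :
    IsWord T u := ⟨hu, h.prefix ⟨t, rfl⟩⟩

lemma isWord_append_iff {u z : List A} (hu : IsWord T u) (hz : IsWord T z) {c : A}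
    (hc : u.getLast? = some c) :
    IsWord T (u ++ z) ↔ ∀ b ∈ z.head?, T c b := by
  rw [isWord_append hz.1]
  constructor
  · rintro ⟨-, -, h⟩ b hb
    exact h c (by rw [hc]; rfl) b hb
  · intro h
    refine ⟨hu.2, hz, ?_⟩
    intro c' hc' b hb
    rw [hc, Option.mem_def] at hc'
    obtain rfl := Option.some_inj.mp hc'
    exact h b hb

lemma getLast?_append_some {w t : List A} (ht : t ≠ []) :
    (w ++ t).getLast? = some (t.getLast ht) := by
  rw [List.getLast?_append_of_ne_nil _ ht, List.getLast?_eq_getLast ht]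

variable (T) in
def Rep (γ : PMap A) : Prop :=
  γ = pzero ∨ ∃ s w xs : List A, (s = [] ∨ IsWord T s) ∧ (w = [] ∨ IsWord T w) ∧
    xs ≠ [] ∧ γ = NF T s xs w

lemma comp_lt {s xs w s' xs' w' : List A}
    (hs' : s' = [] ∨ IsWord T s') (hw' : w' = [] ∨ IsWord T w')
    (hxs' : xs' ≠ []) (hlen : w.length < s'.length) :
    Rep T (pcomp (NF T s xs w) (NF T s' xs' w')) := by
  have hs'ne : s' ≠ [] := by
    intro h; subst h; simp at hlen
  have hs'w : IsWord T s' := hs'.resolve_left hs'ne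
  by_cases hwp : w <+: s'
  case neg =>
    left
    apply eq_pzero
    intro y u h
    obtain ⟨m, hg, hf⟩ := pcomp_eq_some.mp h
    obtain ⟨z', rfl, rfl, -, -, -, -⟩ := NF_eq_some.mp hg
    obtain ⟨z, hm, -, -, -, -, -⟩ := NF_eq_some.mp hf
    exact hwp (List.prefix_of_prefix_length_le ⟨z, hm.symm⟩ (s'.prefix_append z') hlen.le)
  case pos =>
  obtain ⟨t, rfl⟩ := hwp
  have ht : t ≠ [] := by
    intro h; subst h; simp at hlen
  have hwt : IsWord T t := word_suffix hs'w.2 ht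
  have hlast : (w ++ t).getLast? = some (t.getLast ht) := getLast?_append_some ht
  by_cases hst : IsWord T (s ++ t)
  case neg =>
    left; apply eq_pzero; intro y u h
    obtain ⟨m, hg, hf⟩ := pcomp_eq_some.mp h
    obtain ⟨z', rfl, rfl, -, -, -, -⟩ := NF_eq_some.mp hg
    obtain ⟨z, hm, -, -, -, -, h5⟩ := NF_eq_some.mp hf
    obtain rfl : z = t ++ z' := by
      rw [List.append_assoc] at hm
      exact (List.append_cancel_left hm).symm
    rw [← List.append_assoc] at h5
    exact hst (word_prefix h5.2 (by simp [ht]))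
  case pos =>
  by_cases hxst : HdC T xs t
  case neg =>
    left; apply eq_pzero; intro y u h
    obtain ⟨m, hg, hf⟩ := pcomp_eq_some.mp h
    obtain ⟨z', rfl, rfl, -, -, -, -⟩ := NF_eq_some.mp hg
    obtain ⟨z, hm, -, -, -, h4, -⟩ := NF_eq_some.mp hf
    obtain rfl : z = t ++ z' := by
      rw [List.append_assoc] at hm
      exact (List.append_cancel_left hm).symm
    exact hxst ((HdC_append_right ht).mp h4)
  case pos =>
  right
  refine ⟨s ++ t, w', t.getLast ht :: xs', Or.inr hst, hw', by simp, ?_⟩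
  apply ext_some; intro y u
  rw [pcomp_eq_some, NF_eq_some]
  constructor
  · rintro ⟨m, hg, hf⟩
    obtain ⟨z', rfl, rfl, g2, g3, g4, g5⟩ := NF_eq_some.mp hg
    obtain ⟨z, hm, rfl, f2, f3, f4, f5⟩ := NF_eq_some.mp hf
    obtain rfl : z = t ++ z' := by
      rw [List.append_assoc] at hm
      exact (List.append_cancel_left hm).symm
    refine ⟨z', rfl, by rw [List.append_assoc], g2, g3, ?_,
      by rw [List.append_assoc]; exact f5⟩
    rw [HdC_cons]
    exact ⟨(isWord_append_iff hwt g3 (List.getLast?_eq_getLast ht)).mp f3, g4⟩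
  · rintro ⟨z', rfl, rfl, h2, h3, h4, h5⟩
    rw [HdC_cons] at h4
    have hz : IsWord T (t ++ z') :=
      (isWord_append_iff hwt h3 (List.getLast?_eq_getLast ht)).mpr h4.1
    have hs'z : IsWord T ((w ++ t) ++ z') := (isWord_append_iff hs'w h3 hlast).mpr h4.1
    refine ⟨(w ++ t) ++ z', NF_eq_some.mpr ⟨z', rfl, rfl, h2, h3, h4.2, hs'z⟩,
      NF_eq_some.mpr ⟨t ++ z', by rw [List.append_assoc], by rw [List.append_assoc],
        by rwa [List.append_assoc] at hs'z, hz, (HdC_append_right ht).mpr hxst,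
        by rwa [List.append_assoc] at h5⟩⟩

lemma comp_eq' {s xs w s' xs' w' : List A}
    (hs : s = [] ∨ IsWord T s) (hs' : s' = [] ∨ IsWord T s')
    (hw' : w' = [] ∨ IsWord T w')
    (hxs : xs ≠ []) (hlen : w.length = s'.length) :
    Rep T (pcomp (NF T s xs w) (NF T s' xs' w')) := by
  by_cases hws : w = s'
  case neg =>
    left; apply eq_pzero; intro y u h
    obtain ⟨m, hg, hf⟩ := pcomp_eq_some.mp h
    obtain ⟨z', rfl, rfl, -, -, -, -⟩ := NF_eq_some.mp hg
    obtain ⟨z, hm, -, -, -, -, -⟩ := NF_eq_some.mp hf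
    exact hws (List.append_inj hm hlen.symm).1.symm
  case pos =>
  subst hws
  right
  refine ⟨s, w', w.getLast?.toList ++ (xs ++ xs'), hs, hw', by simp [hxs], ?_⟩
  apply ext_some; intro y u
  rw [pcomp_eq_some, NF_eq_some]
  constructor
  · rintro ⟨m, hg, hf⟩
    obtain ⟨z', rfl, rfl, g2, g3, g4, g5⟩ := NF_eq_some.mp hg
    obtain ⟨z, hm, rfl, f2, f3, f4, f5⟩ := NF_eq_some.mp hf
    obtain rfl : z = z' := (List.append_cancel_left hm).symm
    refine ⟨_, rfl, rfl, g2, g3, ?_, f5⟩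
    rw [HdC_append_left, HdC_append_left, HdC_toList]
    exact ⟨((isWord_append (T := T) g3.1).mp g5).2.2, f4, g4⟩
  · rintro ⟨z, rfl, rfl, h2, h3, h4, h5⟩
    rw [HdC_append_left, HdC_append_left, HdC_toList] at h4
    obtain ⟨hL, hx, hx'⟩ := h4
    have hwz : IsWord T (w ++ z) := by
      rw [isWord_append h3.1]
      refine ⟨?_, h3, hL⟩
      rcases hs' with rfl | hw
      · exact List.isChain_nil
      · exact hw.2
    exact ⟨w ++ z, NF_eq_some.mpr ⟨z, rfl, rfl, h2, h3, hx', hwz⟩,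
      NF_eq_some.mpr ⟨z, rfl, rfl, hwz, h3, hx, h5⟩⟩

lemma Rep_inv {f : PMap A} (h : Rep T f) : Rep T (pinv f) := by
  rcases h with rfl | ⟨s, w, xs, hs, hw, hxs, rfl⟩
  · left; exact pinv_pzero
  · right; exact ⟨w, s, xs, hw, hs, hxs, pinv_NF⟩

lemma Rep_comp {f g : PMap A} (hf : Rep T f) (hg : Rep T g) : Rep T (pcomp f g) := by
  rcases hf with rfl | ⟨s, w, xs, hs, hw, hxs, rfl⟩
  · left; exact pcomp_pzero_left
  rcases hg with rfl | ⟨s', w', xs', hs', hw', hxs', rfl⟩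
  · left; exact pcomp_pzero_right
  rcases Nat.lt_trichotomy w.length s'.length with hlt | heq | hgt
  · exact comp_lt hs' hw' hxs' hlt
  · exact comp_eq' hs hs' hw' hxs heq
  · have key : pcomp (NF T s xs w) (NF T s' xs' w') =
        pinv (pcomp (NF T w' xs' s') (NF T w xs s)) := by
      rw [pinv_pcomp NF_inj NF_inj, pinv_NF, pinv_NF]
    rw [key]
    exact Rep_inv (comp_lt hw hs hxs hgt)

lemma Rep_hull {γ : PMap A} (hγ : Hull T γ) : Rep T γ := by
  induction hγ with
  | gen h =>
    right
    exact ⟨_, [], [_], Or.inr h, Or.inl rfl, by simp, theta_eq_NF h⟩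
  | zero => left; rfl
  | comp _ _ ihf ihg => exact Rep_comp ihf ihg
  | inv _ ih => exact Rep_inv ih

end S6

/-- Every nonzero element of the inverse hull is of the form
`θ_s θ_{x₁}⁻¹θ_{x₁} ⋯ θ_{xₙ}⁻¹θ_{xₙ} θ_w⁻¹` with `n ≥ 1`, `xᵢ ∈ A`, and
`s, w ∈ L_T ∪ {1}` (note `theta T [] ` is the identity on `L_T`). -/
theorem stmt6 {A : Type} [Fintype A] (T : A → A → Prop) (hT : ∀ a : A, ∃ b : A, T a b)
    (γ : PMap A) (hγ : Hull T γ) (hnz : γ ≠ pzero) :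
    ∃ (s w xs : List A),
      (s = [] ∨ IsWord T s) ∧ (w = [] ∨ IsWord T w) ∧ xs ≠ [] ∧
      γ = pcomp (theta T s) (pcomp (prodIdems T xs) (pinv (theta T w))) := by
  obtain ⟨s, w, xs, hs, hw, hxs, rfl⟩ := (S6.Rep_hull hγ).resolve_left hnz
  exact ⟨s, w, xs, hs, hw, hxs, S6.NF_spec⟩
end

section
/- Let n ≥ 1 and x_1,…,x_n ∈ A with τ = θ_{x_1}^{-1}θ_{x_1} ⋯ θ_{x_n}^{-1}θ_{x_n} nonzero. Then there exists a ∈ A with τ > θ_a θ_a^{-1} in the natural partial order on idempotent partial bijections (i.e., the domain of θ_a θ_a^{-1} is a proper subset of the domain of τ). -/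
open Classical in
lemma theta_single_some {A : Type} (T : A → A → Prop) (a : A) (z y : List A) :
    theta T [a] z = some y ↔ IsWord T z ∧ IsWord T (a :: z) ∧ y = a :: z := by
  constructor
  · intro h
    rw [theta] at h
    split_ifs at h with hc
    · exact ⟨hc.1, hc.2, (Option.some_injective _ h).symm⟩
  · rintro ⟨h1, h2, rfl⟩
    show (if IsWord T z ∧ IsWord T ([a] ++ z) then some ([a] ++ z) else none) = some (a :: z)
    rw [if_pos ⟨h1, h2⟩]
    rfl

open Classical in
lemma idemL_eq {A : Type} (T : A → A → Prop) (a : A) (x : List A) :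
    idemL T a x = if IsWord T x ∧ IsWord T (a :: x) then some x else none := by
  unfold idemL pcomp
  by_cases h : IsWord T x ∧ IsWord T (a :: x)
  · rw [if_pos h, show theta T [a] x = some (a :: x) from
      (theta_single_some T a x (a :: x)).2 ⟨h.1, h.2, rfl⟩]
    show pinv (theta T [a]) (a :: x) = some x
    have hex : ∃ z, theta T [a] z = some (a :: x) :=
      ⟨x, (theta_single_some T a x (a :: x)).2 ⟨h.1, h.2, rfl⟩⟩
    rw [pinv, dif_pos hex]
    have hs := (theta_single_some T a _ _).1 hex.choose_spec
    have hx : hex.choose = x := by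
      have := hs.2.2
      injection this with _ h
      exact h.symm
    rw [hx]
  · rw [if_neg h, show theta T [a] x = none from ?_]
    · rfl
    · rw [theta, if_neg]
      exact fun hc => h ⟨hc.1, hc.2⟩

open Classical in
lemma prodIdems_eq {A : Type} (T : A → A → Prop) (xs : List A) (x : List A) :
    prodIdems T xs x =
      if IsWord T x ∧ ∀ a ∈ xs, IsWord T (a :: x) then some x else none := by
  induction xs with
  | nil => simp [prodIdems, pid]
  | cons b bs ih =>
    have : prodIdems T (b :: bs) x = (prodIdems T bs x).bind (idemL T b) := rfl
    rw [this, ih]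
    by_cases h1 : IsWord T x ∧ ∀ a ∈ bs, IsWord T (a :: x)
    · rw [if_pos h1, Option.bind_some (f := idemL T b), idemL_eq]
      by_cases h2 : IsWord T (b :: x)
      · rw [if_pos ⟨h1.1, h2⟩, if_pos ⟨h1.1, fun a ha => by
          rcases List.mem_cons.1 ha with rfl | ha
          · exact h2
          · exact h1.2 a ha⟩]
      · rw [if_neg (fun hc => h2 hc.2), if_neg (fun hc => h2 (hc.2 b (List.mem_cons_self (a := b) (l := bs))))]
    · rw [if_neg h1, Option.bind_none (f := idemL T b), if_neg]
      intro hc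
      exact h1 ⟨hc.1, fun a ha => hc.2 a (List.mem_cons_of_mem b ha)⟩

lemma rgIdem_dom {A : Type} (T : A → A → Prop) (a : A) (y : List A) :
    rgIdem T a y ≠ none ↔ ∃ x, IsWord T x ∧ IsWord T (a :: x) ∧ y = a :: x := by
  unfold rgIdem pcomp
  by_cases h : ∃ z, theta T [a] z = some y
  · have hs := (theta_single_some T a _ _).1 h.choose_spec
    rw [show pinv (theta T [a]) y = some h.choose from by rw [pinv, dif_pos h],
      Option.bind_some (f := theta T [a]), h.choose_spec]
    simp only [ne_eq, reduceCtorEq, not_false_eq_true, true_iff]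
    exact ⟨h.choose, hs⟩
  · rw [show pinv (theta T [a]) y = none from by rw [pinv, dif_neg h], Option.bind_none (f := theta T [a])]
    simp only [ne_eq, not_true_eq_false, false_iff]
    rintro ⟨x, h1, h2, rfl⟩
    exact h ⟨x, (theta_single_some T a x _).2 ⟨h1, h2, rfl⟩⟩

/-- A nonzero product `τ = θ_{x₁}⁻¹θ_{x₁} ⋯ θ_{xₙ}⁻¹θ_{xₙ}` lies strictly above
some `θ_a θ_a⁻¹`: the domain of `θ_a θ_a⁻¹` is a proper subset of the domain of `τ`. -/
theorem stmt7 {A : Type} [Fintype A] (T : A → A → Prop) (hT : ∀ a : A, ∃ b : A, T a b)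
    (xs : List A) (hxs : xs ≠ []) (hnz : prodIdems T xs ≠ pzero) :
    ∃ a : A, pdom (rgIdem T a) ⊂ pdom (prodIdems T xs) := by
  have hw : ∃ w, prodIdems T xs w ≠ none := by
    by_contra h
    push_neg at h
    exact hnz (funext fun w => h w)
  obtain ⟨w, hwne⟩ := hw
  rw [prodIdems_eq] at hwne
  split_ifs at hwne with hcond
  swap
  · exact absurd rfl hwne
  obtain ⟨⟨hwne', hwch⟩, hall⟩ := hcond
  obtain ⟨a, rest, rfl⟩ := List.exists_cons_of_ne_nil hwne'
  have hTa : ∀ i ∈ xs, T i a := fun i hi => (List.isChain_cons_cons.1 (hall i hi).2).1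
  refine ⟨a, ?_, ?_⟩
  · -- pdom (rgIdem T a) ⊆ pdom (prodIdems T xs)
    intro y hy
    have hy' : rgIdem T a y ≠ none := hy
    rw [rgIdem_dom] at hy'
    replace hy := hy'
    obtain ⟨x, hx, hax, rfl⟩ := hy
    show prodIdems T xs (a :: x) ≠ none
    rw [prodIdems_eq, if_pos ⟨hax, fun i hi =>
      ⟨List.cons_ne_nil _ _, List.isChain_cons_cons.2 ⟨hTa i hi, hax.2⟩⟩⟩]
    exact Option.some_ne_none _
  · -- not superset: [a] is in pdom (prodIdems) but not in pdom (rgIdem)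
    intro hsub
    have ha_mem : [a] ∈ pdom (prodIdems T xs) := by
      show prodIdems T xs [a] ≠ none
      rw [prodIdems_eq, if_pos ⟨⟨List.cons_ne_nil _ _, List.isChain_singleton a⟩,
        fun i hi => ⟨List.cons_ne_nil _ _, List.isChain_cons_cons.2 ⟨hTa i hi, List.isChain_singleton a⟩⟩⟩]
      exact Option.some_ne_none _
    have hbad : rgIdem T a [a] ≠ none := hsub ha_mem
    rw [rgIdem_dom] at hbad
    obtain ⟨x, hx, _, hax⟩ := hbad
    injection hax with _ h
    exact hx.1 h.symm
end

section
/- If τ is an idempotent in H(S_T) with τ > θ_a θ_a^{-1} for some a ∈ A, and τ ∉ {θ_b θ_b^{-1} : b ∈ A}, then τ = θ_{x_1}^{-1}θ_{x_1} ⋯ θ_{x_n}^{-1}θ_{x_n} for some n ≥ 1 and x_1,…,x_n ∈ A. -/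
namespace Stmt8Aux

variable {A : Type} (T : A → A → Prop)

open Classical in
noncomputable def nf (u xs v : List A) : PMap A := fun x =>
  if IsWord T x ∧ v <+: x ∧ IsWord T (x.drop v.length) ∧ IsWord T (u ++ x.drop v.length)
      ∧ (∀ a ∈ xs, IsWord T (a :: x.drop v.length)) then some (u ++ x.drop v.length) else none

lemma nf_eq_some {u xs v x z : List A} :
    nf T u xs v x = some z ↔ ∃ y, x = v ++ y ∧ z = u ++ y ∧ IsWord T y ∧ IsWord T (v ++ y)
      ∧ IsWord T (u ++ y) ∧ ∀ a ∈ xs, IsWord T (a :: y) := by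
  constructor
  · intro h
    unfold nf at h
    split_ifs at h with hc
    obtain ⟨hx, ⟨t, ht⟩, h3, h4, h5⟩ := hc
    subst ht
    rw [List.drop_left] at h3 h4 h5 h
    exact ⟨t, rfl, (Option.some.inj h).symm, h3, hx, h4, h5⟩
  · rintro ⟨y, rfl, rfl, h3, h4, h5, h6⟩
    have hd : (v ++ y).drop v.length = y := List.drop_left
    unfold nf
    rw [if_pos ⟨h4, List.prefix_append v y, hd.symm ▸ h3, hd.symm ▸ h5, hd.symm ▸ h6⟩, hd]

lemma pmap_ext {f g : PMap A} (h : ∀ x z, f x = some z ↔ g x = some z) : f = g :=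
  funext fun x => Option.ext fun z => h x z

lemma eq_pinv {f g : PMap A} (h : ∀ x z, f x = some z ↔ g z = some x) : f = pinv g := by
  funext x
  unfold pinv
  split_ifs with hc
  · exact (h x hc.choose).mpr hc.choose_spec
  · cases hf : f x with
    | none => rfl
    | some z => exact absurd ⟨z, (h x z).mp hf⟩ hc

lemma pinv_pzero : pinv (pzero : PMap A) = pzero := by
  funext x
  unfold pinv pzero
  rw [dif_neg]
  rintro ⟨y, h⟩
  exact absurd h (by simp)

lemma pinv_nf (u xs v : List A) : pinv (nf T u xs v) = nf T v xs u := by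
  symm
  apply eq_pinv
  intro x z
  rw [nf_eq_some, nf_eq_some]
  constructor <;> rintro ⟨y, h1, h2, h3, h4, h5, h6⟩ <;> exact ⟨y, h2, h1, h3, h5, h4, h6⟩

lemma pcomp_eq_some {f g : PMap A} {x z : List A} :
    pcomp f g x = some z ↔ ∃ m, g x = some m ∧ f m = some z := by
  unfold pcomp
  cases h : g x <;> simp [Option.bind]

lemma pcomp_pzero_left (g : PMap A) : pcomp pzero g = pzero := by
  funext x
  unfold pcomp pzero
  cases g x <;> rfl

lemma pcomp_pzero_right (f : PMap A) : pcomp f pzero = pzero := rfl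

lemma theta_eq_nf (w : List A) : theta T w = nf T w [] [] := by
  apply pmap_ext
  intro x z
  rw [nf_eq_some]
  unfold theta
  split_ifs with hc
  · constructor
    · intro h
      exact ⟨x, rfl, (Option.some.inj h).symm, hc.1, hc.1, hc.2, by simp⟩
    · rintro ⟨y, hy, rfl, -, -, -, -⟩
      simp at hy; subst hy; rfl
  · constructor
    · rintro h; exact absurd h (by simp)
    · rintro ⟨y, hy, rfl, h3, h4, h5, -⟩
      simp at hy; subst hy
      exact absurd ⟨h3, h5⟩ hc

lemma isWord_append {s y : List A} (hy : y ≠ []) :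
    IsWord T (s ++ y) ↔ s.Chain' T ∧ IsWord T y ∧ ∀ a ∈ s.getLast?, ∀ b ∈ y.head?, T a b := by
  unfold IsWord List.Chain'
  rw [List.isChain_append]
  constructor
  · rintro ⟨-, h1, h2, h3⟩; exact ⟨h1, ⟨hy, h2⟩, h3⟩
  · rintro ⟨h1, ⟨-, h2⟩, h3⟩; exact ⟨by simp [hy], h1, h2, h3⟩

/-- Composition of normal forms, case `p = v` (aligned). -/
lemma comp_nf_eq (u xs v ys q : List A) (hv : v.Chain' T) :
    pcomp (nf T u xs v) (nf T v ys q) = nf T u (xs ++ ys ++ v.getLast?.toList) q := by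
  apply pmap_ext
  intro x z
  rw [pcomp_eq_some, nf_eq_some]
  constructor
  · rintro ⟨m, hm1, hm2⟩
    rw [nf_eq_some] at hm1 hm2
    obtain ⟨y, rfl, rfl, hy, hqy, hvy, hys⟩ := hm1
    obtain ⟨w, hw, rfl, hww, hvw, huw, hxs⟩ := hm2
    obtain rfl : y = w := List.append_cancel_left hw
    refine ⟨y, rfl, rfl, hww, hqy, huw, ?_⟩
    intro a ha
    rcases List.mem_append.mp ha with ha | ha
    · rcases List.mem_append.mp ha with ha | ha
      · exact hxs a ha
      · exact hys a ha
    · have ha' : v.getLast? = some a := by simpa using ha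
      rw [show (a :: y) = [a] ++ y from rfl, isWord_append T hww.1]
      refine ⟨List.isChain_singleton a, hww, ?_⟩
      intro c hc b hb
      obtain rfl : a = c := by simpa using hc
      exact ((isWord_append T hww.1).mp hvw).2.2 a ha' b hb
  · rintro ⟨y, rfl, rfl, hy, hqy, huy, hconds⟩
    have hvy : IsWord T (v ++ y) := by
      rcases eq_or_ne v [] with rfl | hvne
      · simpa using hy
      · rw [isWord_append T hy.1]
        refine ⟨hv, hy, ?_⟩
        intro a ha b hb
        have hc : IsWord T (a :: y) := hconds a (by
          refine List.mem_append.mpr (Or.inr ?_)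
          simpa using ha)
        exact (List.isChain_cons.mp hc.2).1 b hb
    refine ⟨v ++ y, ?_, ?_⟩
    · rw [nf_eq_some]
      exact ⟨y, rfl, rfl, hy, hqy, hvy, fun a ha =>
        hconds a (List.mem_append.mpr (Or.inl (List.mem_append.mpr (Or.inr ha))))⟩
    · rw [nf_eq_some]
      exact ⟨y, rfl, rfl, hy, hvy, huy, fun a ha =>
        hconds a (List.mem_append.mpr (Or.inl (List.mem_append.mpr (Or.inl ha))))⟩

open Classical in
lemma comp_nf_ne (u xs v ys q p' : List A) (hp' : p' ≠ []) :
    pcomp (nf T u xs v) (nf T (v ++ p') ys q) =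
      if (u ++ p').Chain' T ∧ (v ++ p').Chain' T ∧ (∀ a ∈ xs, ∀ b ∈ p'.head?, T a b)
      then nf T (u ++ p') (ys ++ p'.getLast?.toList) q else pzero := by
  have hhead : ∀ y : List A, (p' ++ y).head? = p'.head? := by
    intro y
    cases p' with
    | nil => exact absurd rfl hp'
    | cons c t => rfl
  have hLHS : ∀ x z, pcomp (nf T u xs v) (nf T (v ++ p') ys q) x = some z ↔
      ∃ y, x = q ++ y ∧ z = u ++ (p' ++ y) ∧ IsWord T y ∧ IsWord T (q ++ y) ∧
        IsWord T (v ++ (p' ++ y)) ∧ (∀ a ∈ ys, IsWord T (a :: y)) ∧ IsWord T (p' ++ y) ∧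
        IsWord T (u ++ (p' ++ y)) ∧ (∀ a ∈ xs, IsWord T (a :: (p' ++ y))) := by
    intro x z
    rw [pcomp_eq_some]
    constructor
    · rintro ⟨m, hm1, hm2⟩
      rw [nf_eq_some] at hm1 hm2
      obtain ⟨y, rfl, rfl, hy, hqy, hpy, hys⟩ := hm1
      obtain ⟨w, hw, rfl, hww, hvw, huw, hxs⟩ := hm2
      rw [List.append_assoc] at hw
      obtain rfl : w = p' ++ y := (List.append_cancel_left hw).symm
      exact ⟨y, rfl, rfl, hy, hqy, hvw, hys, hww, huw, hxs⟩
    · rintro ⟨y, rfl, rfl, hy, hqy, hvpy, hys, hpy, hupy, hxs⟩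
      refine ⟨(v ++ p') ++ y, ?_, ?_⟩
      · rw [nf_eq_some]
        exact ⟨y, rfl, rfl, hy, hqy, by rwa [List.append_assoc], hys⟩
      · rw [nf_eq_some]
        exact ⟨p' ++ y, List.append_assoc v p' y, rfl, hpy, hvpy, hupy, hxs⟩
  split_ifs with hS
  · obtain ⟨hS1, hS2, hS3⟩ := hS
    apply pmap_ext
    intro x z
    rw [hLHS, nf_eq_some]
    constructor
    · rintro ⟨y, rfl, rfl, hy, hqy, hvpy, hys, hpy, hupy, hxs⟩
      refine ⟨y, rfl, by rw [List.append_assoc], hy, hqy, by rwa [← List.append_assoc] at hupy, ?_⟩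
      intro c hc
      rcases List.mem_append.mp hc with hc | hc
      · exact hys c hc
      · have hc' : p'.getLast? = some c := by simpa using hc
        rw [show (c :: y) = [c] ++ y from rfl, isWord_append T hy.1]
        refine ⟨List.isChain_singleton c, hy, ?_⟩
        intro a ha b hb
        obtain rfl : c = a := by simpa using ha
        exact ((isWord_append T hy.1).mp hpy).2.2 c hc' b hb
    · rintro ⟨y, rfl, hz, hy, hqy, hupy', hcs⟩
      have hlast : p'.getLast? = some (p'.getLast hp') := List.getLast?_eq_getLast hp'
      have hcy : IsWord T (p'.getLast hp' :: y) :=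
        hcs _ (List.mem_append.mpr (Or.inr (by simp [hlast])))
      have hlink : ∀ a ∈ p'.getLast?, ∀ b ∈ y.head?, T a b := by
        intro a ha b hb
        rw [hlast] at ha
        obtain rfl : p'.getLast hp' = a := by simpa using ha
        exact (List.isChain_cons.mp hcy.2).1 b hb
      have hchp' : p'.Chain' T := hS2.suffix (List.suffix_append v p')
      have hpy : IsWord T (p' ++ y) := (isWord_append T hy.1).mpr ⟨hchp', hy, hlink⟩
      have hvpy : IsWord T (v ++ (p' ++ y)) := by
        rw [isWord_append T hpy.1]
        refine ⟨hS2.prefix (List.prefix_append v p'), hpy, ?_⟩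
        intro a ha b hb
        rw [hhead y] at hb
        exact (List.isChain_append.mp hS2).2.2 a ha b hb
      have hupy : IsWord T (u ++ (p' ++ y)) := by
        rw [← List.append_assoc]; exact hupy'
      refine ⟨y, rfl, by rwa [List.append_assoc] at hz, hy, hqy, hvpy,
        fun a ha => hcs a (List.mem_append.mpr (Or.inl ha)), hpy, hupy, ?_⟩
      intro c hc
      rw [show (c :: (p' ++ y)) = [c] ++ (p' ++ y) from rfl, isWord_append T hpy.1]
      refine ⟨List.isChain_singleton c, hpy, ?_⟩
      intro a ha b hb
      obtain rfl : c = a := by simpa using ha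
      rw [hhead y] at hb
      exact hS3 c hc b hb
  · funext x
    show _ = (pzero : PMap A) x
    cases hx : pcomp (nf T u xs v) (nf T (v ++ p') ys q) x with
    | none => rfl
    | some z =>
      exfalso
      apply hS
      obtain ⟨y, rfl, hz, hy, hqy, hvpy, hys, hpy, hupy, hxs⟩ := (hLHS _ z).mp hx
      refine ⟨?_, ?_, ?_⟩
      · exact hupy.2.prefix (by rw [← List.append_assoc] at hupy ⊢; exact List.prefix_append _ _)
      · exact hvpy.2.prefix (by rw [← List.append_assoc] at hvpy ⊢; exact List.prefix_append _ _)
      · intro c hc b hb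
        have h2 := (List.isChain_cons.mp (hxs c hc).2).1
        exact h2 b (by rw [hhead y]; exact hb)

lemma comp_symm (u xs v p ys q : List A) :
    pcomp (nf T u xs v) (nf T p ys q) = pinv (pcomp (nf T q ys p) (nf T v xs u)) := by
  apply eq_pinv
  intro x z
  rw [pcomp_eq_some, pcomp_eq_some]
  constructor
  · rintro ⟨m, hm1, hm2⟩
    rw [nf_eq_some] at hm1 hm2
    obtain ⟨y, rfl, rfl, hy, hqy, hpy, hys⟩ := hm1
    obtain ⟨w, hw, rfl, hww, hvw, huw, hxs⟩ := hm2
    refine ⟨v ++ w, ?_, ?_⟩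
    · rw [nf_eq_some]; exact ⟨w, rfl, rfl, hww, huw, hvw, hxs⟩
    · rw [nf_eq_some]; exact ⟨y, hw.symm, rfl, hy, hpy, hqy, hys⟩
  · rintro ⟨m, hm1, hm2⟩
    rw [nf_eq_some] at hm1 hm2
    obtain ⟨w, rfl, rfl, hww, huw, hvw, hxs⟩ := hm1
    obtain ⟨y, hw, rfl, hy, hpy, hqy, hys⟩ := hm2
    refine ⟨p ++ y, ?_, ?_⟩
    · rw [nf_eq_some]; exact ⟨y, rfl, rfl, hy, hqy, hpy, hys⟩
    · rw [nf_eq_some]; exact ⟨w, hw.symm, rfl, hww, hvw, huw, hxs⟩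

def Good (f : PMap A) : Prop :=
  f = pzero ∨ ∃ u xs v, u.Chain' T ∧ v.Chain' T ∧ (¬(u = [] ∧ v = [] ∧ xs = [])) ∧ f = nf T u xs v

lemma good_comp {f g : PMap A} (hf : Good T f) (hg : Good T g) : Good T (pcomp f g) := by
  rcases hf with rfl | ⟨u, xs, v, hcu, hcv, hne, rfl⟩
  · left; exact pcomp_pzero_left g
  rcases hg with rfl | ⟨p, ys, q, hcp, hcq, hne2, rfl⟩
  · left; exact pcomp_pzero_right _
  by_cases hvp : v <+: p
  · obtain ⟨p', rfl⟩ := hvp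
    rcases eq_or_ne p' [] with rfl | hp'
    · rw [List.append_nil] at hcp ⊢
      rw [comp_nf_eq T u xs v ys q hcv]
      right
      refine ⟨u, xs ++ ys ++ v.getLast?.toList, q, hcu, hcq, ?_, rfl⟩
      rintro ⟨rfl, rfl, h3⟩
      rw [List.append_eq_nil_iff] at h3
      obtain ⟨h4, h5⟩ := h3
      rw [List.append_eq_nil_iff] at h4
      have h6 : v.getLast? = none := by
        cases hgl : v.getLast? with
        | none => rfl
        | some z => rw [hgl] at h5; exact absurd h5 (by simp)
      have hv0 : v = [] := by
        cases v with
        | nil => rfl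
        | cons c t =>
          rw [List.getLast?_eq_getLast (l := c :: t) (by simp)] at h6
          exact absurd h6 (by simp)
      exact hne ⟨rfl, hv0, h4.1⟩
    · rw [comp_nf_ne T u xs v ys q p' hp']
      split_ifs with hS
      · right
        exact ⟨u ++ p', ys ++ p'.getLast?.toList, q, hS.1, hcq, by simp [hp'], rfl⟩
      · left; rfl
  · by_cases hpv : p <+: v
    · obtain ⟨v', rfl⟩ := hpv
      have hv' : v' ≠ [] := by rintro rfl; simp at hvp
      rw [comp_symm, comp_nf_ne T q ys p xs u v' hv']
      split_ifs with hS
      · rw [pinv_nf]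
        right
        exact ⟨u, xs ++ v'.getLast?.toList, q ++ v', hcu, hS.1, by simp [hv'], rfl⟩
      · rw [pinv_pzero]; left; rfl
    · left
      funext x
      show _ = (pzero : PMap A) x
      cases hx : pcomp (nf T u xs v) (nf T p ys q) x with
      | none => rfl
      | some z =>
        exfalso
        obtain ⟨m, hm1, hm2⟩ := pcomp_eq_some.mp hx
        rw [nf_eq_some] at hm1 hm2
        obtain ⟨y, rfl, rfl, -, -, -, -⟩ := hm1
        obtain ⟨w, hw, rfl, -, -, -, -⟩ := hm2
        rcases List.prefix_or_prefix_of_prefix ⟨y, rfl⟩ ⟨w, hw.symm⟩ with h | h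
        · exact hpv h
        · exact hvp h

lemma hull_good {f : PMap A} (h : Hull T f) : Good T f := by
  induction h with
  | @gen w hw =>
    right
    exact ⟨w, [], [], hw.2, List.isChain_nil, by simp [hw.1], theta_eq_nf T w⟩
  | zero => left; rfl
  | comp _ _ ihf ihg => exact good_comp T ihf ihg
  | inv _ ih =>
    rcases ih with rfl | ⟨u, xs, v, h1, h2, h3, rfl⟩
    · left; exact pinv_pzero
    · right
      refine ⟨v, xs, u, h2, h1, ?_, pinv_nf T u xs v⟩
      rintro ⟨rfl, rfl, rfl⟩
      exact h3 ⟨rfl, rfl, rfl⟩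

lemma pid_eq_nf : pid T = nf T [] [] [] := by
  rw [← theta_eq_nf]
  funext x
  unfold pid theta
  by_cases h : IsWord T x <;> simp [h]

lemma idemL_eq_nf (a : A) : idemL T a = nf T [] [a] [] := by
  unfold idemL
  rw [theta_eq_nf, pinv_nf, comp_nf_eq T [] [] [a] [] [] (List.isChain_singleton a)]
  simp

lemma prodIdems_eq_nf (xs : List A) : prodIdems T xs = nf T [] xs [] := by
  induction xs with
  | nil => exact pid_eq_nf T
  | cons a xs ih =>
    have : prodIdems T (a :: xs) = pcomp (idemL T a) (prodIdems T xs) := rfl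
    rw [this, ih, idemL_eq_nf, comp_nf_eq T [] [a] [] xs [] List.isChain_nil]
    simp

lemma rgIdem_eq_nf (a : A) : rgIdem T a = nf T [a] [] [a] := by
  unfold rgIdem
  rw [theta_eq_nf, pinv_nf, comp_nf_eq T [a] [] [] [] [a] List.isChain_nil]
  simp

end Stmt8Aux

open Stmt8Aux in
/-- An idempotent of the hull strictly above some `θ_a θ_a⁻¹` and not of the form
`θ_b θ_b⁻¹` is a product `θ_{x₁}⁻¹θ_{x₁} ⋯ θ_{xₙ}⁻¹θ_{xₙ}` with `n ≥ 1`. -/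
theorem stmt8 {A : Type} [Fintype A] (T : A → A → Prop) (hT : ∀ a : A, ∃ b : A, T a b)
    (τ : PMap A) (hτ : Hull T τ) (hidem : pcomp τ τ = τ)
    (habove : ∃ a : A, pcomp τ (rgIdem T a) = rgIdem T a ∧ τ ≠ rgIdem T a)
    (hnotO : ∀ b : A, τ ≠ rgIdem T b) :
    ∃ xs : List A, xs ≠ [] ∧ τ = prodIdems T xs := by
  obtain ⟨a, ha, -⟩ := habove
  obtain ⟨b, hb⟩ := hT a
  have hword_ab : IsWord T [a, b] := ⟨by simp, List.isChain_pair.mpr hb⟩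
  have hword_b : IsWord T [b] := ⟨by simp, List.isChain_singleton b⟩
  have hrg : rgIdem T a = nf T [a] [] [a] := rgIdem_eq_nf T a
  have hrg_ab : rgIdem T a [a, b] = some [a, b] := by
    rw [hrg, nf_eq_some]
    exact ⟨[b], rfl, rfl, hword_b, hword_ab, hword_ab, by simp⟩
  have hτab : τ [a, b] = some [a, b] := by
    have h := congrFun ha [a, b]
    rw [show pcomp τ (rgIdem T a) [a, b] = (rgIdem T a [a, b]).bind τ from rfl, hrg_ab] at h
    exact h
  rcases hull_good T hτ with rfl | ⟨u, xs, v, hcu, hcv, hne, rfl⟩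
  · exact absurd hτab (by simp [pzero])
  rw [nf_eq_some] at hτab
  obtain ⟨y, hxy, hzy, hy, hvy, huy, -⟩ := hτab
  obtain rfl : u = v := List.append_cancel_right (hzy.symm.trans hxy)
  cases u with
  | nil =>
    refine ⟨xs, ?_, ?_⟩
    · intro h
      exact hne ⟨rfl, rfl, h⟩
    · rw [prodIdems_eq_nf]
  | cons c u' =>
    cases u' with
    | nil =>
      obtain ⟨rfl, rfl⟩ : a = c ∧ [b] = y := by
        simpa using hxy
      exfalso
      apply hnotO a
      have hcond : ∀ y, IsWord T y → IsWord T ([a] ++ y) → ∀ c ∈ xs, IsWord T (c :: y) := by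
        intro y hy2 hay c hc
        have h1 : rgIdem T a ([a] ++ y) = some ([a] ++ y) := by
          rw [hrg, nf_eq_some]
          exact ⟨y, rfl, rfl, hy2, hay, hay, by simp⟩
        have h2 := congrFun ha ([a] ++ y)
        rw [show pcomp (nf T [a] xs [a]) (rgIdem T a) ([a] ++ y) =
            (rgIdem T a ([a] ++ y)).bind (nf T [a] xs [a]) from rfl, h1] at h2
        rw [show (Option.bind (some ([a] ++ y)) (nf T [a] xs [a])) =
            nf T [a] xs [a] ([a] ++ y) from rfl, nf_eq_some] at h2
        obtain ⟨y', hy', -, -, -, -, hconds⟩ := h2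
        obtain rfl : y = y' := List.append_cancel_left hy'
        exact hconds c hc
      rw [hrg]
      apply pmap_ext
      intro x z
      rw [nf_eq_some, nf_eq_some]
      constructor
      · rintro ⟨y, h1, h2, h3, h4, h5, -⟩
        exact ⟨y, h1, h2, h3, h4, h5, by simp⟩
      · rintro ⟨y, h1, h2, h3, h4, h5, -⟩
        exact ⟨y, h1, h2, h3, h4, h5, hcond y h3 h4⟩
    | cons d u'' =>
      exfalso
      have hlen := congrArg List.length hxy
      simp only [List.length_append, List.length_cons, List.length_nil] at hlen
      have hy1 := hy.1
      cases y with
      | nil => exact hy1 rfl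
      | cons e t => simp only [List.length_cons] at hlen; omega
end

section
/- The inverse hull H(S_T) of a Markov shift is combinatorial: if γ ∈ H(S_T) satisfies γγ* = γ*γ, then γ is idempotent (where γ* denotes the inverse partial bijection). -/
section Aux

variable {A : Type}

theorem pinv_spec {f : PMap A} {x y : List A} (h : pinv f y = some x) : f x = some y := by
  classical
  unfold pinv at h
  split at h
  · rename_i h'
    obtain rfl : h'.choose = x := Option.some.inj h
    exact h'.choose_spec
  · exact absurd h (by simp)

theorem pinv_exists {f : PMap A} {x y : List A} (h : f x = some y) :
    ∃ x', pinv f y = some x' ∧ f x' = some y := by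
  classical
  have h' : ∃ x, f x = some y := ⟨x, h⟩
  refine ⟨h'.choose, ?_, h'.choose_spec⟩
  unfold pinv
  rw [dif_pos h']

/-- Every hull element is a "prefix replacement" partial map. -/
def Pre (u v : List A) (γ : PMap A) : Prop :=
  ∀ x y, γ x = some y → ∃ t, x = v ++ t ∧ y = u ++ t

theorem hull_pre {T : A → A → Prop} {γ : PMap A} (hγ : Hull T γ) :
    ∃ u v, Pre u v γ := by
  induction hγ with
  | @gen w hw =>
    refine ⟨w, [], ?_⟩
    intro x y hxy
    unfold theta at hxy
    split at hxy
    · exact ⟨x, by simp, (Option.some.inj hxy).symm⟩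
    · exact absurd hxy (by simp)
  | zero => exact ⟨[], [], fun x y hxy => absurd hxy (by simp [pzero])⟩
  | @comp f g hf hg ihf ihg =>
    obtain ⟨u1, v1, P1⟩ := ihf
    obtain ⟨u2, v2, P2⟩ := ihg
    by_cases hl : v1.length ≤ u2.length
    · refine ⟨u1 ++ u2.drop v1.length, v2, ?_⟩
      intro x z hxz
      unfold pcomp at hxz
      cases hy : g x with
      | none => rw [hy] at hxz; exact absurd hxz (by intro h; cases h)
      | some y =>
        rw [hy] at hxz
        change f y = some z at hxz
        obtain ⟨t, hx, hyu⟩ := P2 x y hy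
        obtain ⟨s, hyv, hzu⟩ := P1 y z hxz
        have hvs : v1 ++ s = u2 ++ t := hyv.symm.trans hyu
        have hs : s = u2.drop v1.length ++ t := by
          have := congrArg (List.drop v1.length) hvs
          rwa [List.drop_left, List.drop_append_of_le_length hl] at this
        refine ⟨t, hx, ?_⟩
        rw [hzu, hs, List.append_assoc]
    · push_neg at hl
      refine ⟨u1, v2 ++ v1.drop u2.length, ?_⟩
      intro x z hxz
      unfold pcomp at hxz
      cases hy : g x with
      | none => rw [hy] at hxz; exact absurd hxz (by intro h; cases h)
      | some y =>
        rw [hy] at hxz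
        change f y = some z at hxz
        obtain ⟨t, hx, hyu⟩ := P2 x y hy
        obtain ⟨s, hyv, hzu⟩ := P1 y z hxz
        have hvs : u2 ++ t = v1 ++ s := hyu.symm.trans hyv
        have ht : t = v1.drop u2.length ++ s := by
          have := congrArg (List.drop u2.length) hvs
          rwa [List.drop_left, List.drop_append_of_le_length hl.le] at this
        refine ⟨s, ?_, hzu⟩
        rw [hx, ht, List.append_assoc]
  | @inv f hf ihf =>
    obtain ⟨u, v, P⟩ := ihf
    refine ⟨v, u, ?_⟩
    intro y x hyx
    obtain ⟨t, hx, hy⟩ := P x y (pinv_spec hyx)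
    exact ⟨t, hy, hx⟩

end Aux

/-- The inverse hull of a Markov shift is combinatorial. -/
theorem stmt10 {A : Type} [Fintype A] (T : A → A → Prop) (hT : ∀ a : A, ∃ b : A, T a b)
    (γ : PMap A) (hγ : Hull T γ)
    (h : pcomp γ (pinv γ) = pcomp (pinv γ) γ) :
    pcomp γ γ = γ := by
  classical
  obtain ⟨u, v, hP⟩ := hull_pre hγ
  -- domain ⊆ range
  have d2r : ∀ x y, γ x = some y → ∃ w, γ w = some x := by
    intro x y hxy
    obtain ⟨x', hx'1, _⟩ := pinv_exists hxy
    have h1 : pcomp (pinv γ) γ x = some x' := by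
      unfold pcomp; rw [hxy]; exact hx'1
    rw [← h] at h1
    unfold pcomp at h1
    cases hw : pinv γ x with
    | none => rw [hw] at h1; exact absurd h1 (by intro h; cases h)
    | some w => exact ⟨w, pinv_spec hw⟩
  -- range ⊆ domain
  have r2d : ∀ x w, γ w = some x → ∃ y, γ x = some y := by
    intro x w hw
    obtain ⟨x', hx'1, hx'2⟩ := pinv_exists hw
    have h1 : pcomp γ (pinv γ) x = some x := by
      unfold pcomp; rw [hx'1]; exact hx'2
    rw [h] at h1
    unfold pcomp at h1
    cases hy : γ x with
    | none => rw [hy] at h1; exact absurd h1 (by intro h; cases h)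
    | some y => first | exact ⟨y, hy⟩ | exact ⟨y, rfl⟩
  by_cases hz : ∀ x, γ x = none
  · funext x
    show (γ x).bind γ = γ x
    rw [hz x]; rfl
  · push_neg at hz
    obtain ⟨x1, hx1⟩ := hz
    obtain ⟨y1, hy1⟩ := Option.ne_none_iff_exists'.mp hx1
    have hex : ∃ n, ∃ x y, γ x = some y ∧ x.length = n := ⟨x1.length, x1, y1, hy1, rfl⟩
    obtain ⟨x0, y0, hx0, hlen⟩ := Nat.find_spec hex
    obtain ⟨t, hxv, hyu⟩ := hP x0 y0 hx0
    -- |u| = |v|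
    have hmin : ∀ x' y', γ x' = some y' → x0.length ≤ x'.length := by
      intro x' y' hx'
      rw [hlen]
      exact Nat.find_min' hex ⟨x', y', hx', rfl⟩
    obtain ⟨z0, hy0d⟩ := r2d y0 x0 hx0
    obtain ⟨w, hw⟩ := d2r x0 y0 hx0
    obtain ⟨t2, hwv, hxu⟩ := hP w x0 hw
    have h1 : x0.length ≤ y0.length := hmin y0 z0 hy0d
    have h2 : x0.length ≤ w.length := hmin w x0 hw
    have hlen1 : x0.length = v.length + t.length := by rw [hxv, List.length_append]
    have hlen2 : y0.length = u.length + t.length := by rw [hyu, List.length_append]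
    have hlen3 : w.length = v.length + t2.length := by rw [hwv, List.length_append]
    have hlen4 : x0.length = u.length + t2.length := by rw [hxu, List.length_append]
    have huv_len : u.length = v.length := by omega
    -- u = v
    obtain ⟨t', hy0v, _⟩ := hP y0 z0 hy0d
    have huv : u = v := by
      have e1 : y0.take u.length = u := by rw [hyu, List.take_left]
      have e2 : y0.take u.length = v := by rw [hy0v, huv_len, List.take_left]
      rw [← e1, e2]
    -- γ fixes its domain
    have hfix : ∀ x y, γ x = some y → y = x := by
      intro x y hxy
      obtain ⟨s, hx', hy'⟩ := hP x y hxy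
      rw [hx', hy', huv]
    funext x
    show (γ x).bind γ = γ x
    cases hxy : γ x with
    | none => rfl
    | some y =>
      obtain rfl : y = x := hfix x y hxy
      exact hxy
end

section
/- In H(S_T), if α and β are both idempotents of the form θ_{x_1}^{-1}θ_{x_1} ⋯ θ_{x_n}^{-1}θ_{x_n} (lying in O↑ − O) and α D β (i.e., there exists γ ∈ H(S_T) with γγ* = α and γ*γ = β), then α = β. -/
section Stmt11Aux
variable {A : Type} {T : A → A → Prop}

lemma pbind_some (a : List A) (f : PMap A) : (some a).bind f = f a := rfl

lemma pbind_none (f : PMap A) : (none : Option (List A)).bind f = none := rfl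

lemma theta_some {w x y : List A} (h : theta T w x = some y) :
    y = w ++ x ∧ IsWord T x ∧ IsWord T (w ++ x) := by
  unfold theta at h
  split at h
  · exact ⟨(Option.some.injEq _ _ ▸ h).symm, by assumption⟩
  · exact absurd h (by simp)

lemma pinv_some {f : PMap A} {y x : List A} (h : pinv f y = some x) : f x = some y := by
  unfold pinv at h
  split at h
  case isTrue h' => cases h; exact h'.choose_spec
  case isFalse => exact absurd h (by simp)

lemma pinv_def {f : PMap A} {x y : List A} (h : f x = some y) :
    ∃ z, pinv f y = some z ∧ f z = some y := by
  have he : ∃ x, f x = some y := ⟨x, h⟩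
  refine ⟨he.choose, ?_, he.choose_spec⟩
  unfold pinv
  rw [dif_pos he]

open Classical in
lemma idemL_apply (a : A) (x : List A) :
    idemL T a x = if IsWord T x ∧ IsWord T (a :: x) then some x else none := by
  unfold idemL pcomp
  by_cases h : IsWord T x ∧ IsWord T (a :: x)
  · have ht : theta T [a] x = some (a :: x) := by
      unfold theta
      rw [if_pos (show IsWord T x ∧ IsWord T ([a] ++ x) from ⟨h.1, h.2⟩)]
      rfl
    rw [ht, if_pos h, pbind_some]
    obtain ⟨z, hz, hz2⟩ := pinv_def ht
    rw [hz]
    obtain ⟨he, -⟩ := theta_some hz2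
    simpa using he.symm
  · have ht : theta T [a] x = none := by
      unfold theta
      rw [if_neg (show ¬(IsWord T x ∧ IsWord T ([a] ++ x)) from fun hc => h ⟨hc.1, hc.2⟩)]
    rw [ht, if_neg h, pbind_none]

open Classical in
lemma prodIdems_apply (l : List A) (x : List A) :
    prodIdems T l x = if IsWord T x ∧ ∀ a ∈ l, IsWord T (a :: x) then some x else none := by
  induction l with
  | nil =>
    show pid T x = _
    unfold pid
    by_cases h : IsWord T x
    · rw [if_pos h, if_pos ⟨h, by simp⟩]
    · rw [if_neg h, if_neg (fun hc => h hc.1)]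
  | cons a l ih =>
    show (prodIdems T l x).bind (idemL T a) = _
    rw [ih]
    by_cases h : IsWord T x ∧ ∀ b ∈ a :: l, IsWord T (b :: x)
    · have h1 : IsWord T x ∧ ∀ b ∈ l, IsWord T (b :: x) :=
        ⟨h.1, fun b hb => h.2 b (List.mem_cons_of_mem a hb)⟩
      rw [if_pos h1, pbind_some, idemL_apply,
        if_pos ⟨h.1, h.2 a (List.mem_cons_self (a := a) (l := l))⟩, if_pos h]
    · by_cases h1 : IsWord T x ∧ ∀ b ∈ l, IsWord T (b :: x)
      · have h2 : ¬ IsWord T (a :: x) := fun h2 => h ⟨h1.1, fun b hb => by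
          rcases List.mem_cons.mp hb with rfl | hb
          · exact h2
          · exact h1.2 b hb⟩
        rw [if_pos h1, pbind_some, idemL_apply, if_neg (fun hc => h2 hc.2), if_neg h]
      · rw [if_neg h1, pbind_none, if_neg h]

def Shape (T : A → A → Prop) (f : PMap A) (u v : List A) : Prop :=
  ∀ x y, f x = some y → v <+: x ∧ y = u ++ x.drop v.length ∧ IsWord T (x.drop v.length)

lemma pcomp_some {f g : PMap A} {x y : List A} (h : pcomp f g x = some y) :
    ∃ m, g x = some m ∧ f m = some y := by
  unfold pcomp at h
  cases hgx : g x with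
  | none => rw [hgx] at h; exact absurd h (by rw [pbind_none]; simp)
  | some m => rw [hgx, pbind_some] at h; exact ⟨m, rfl, h⟩

lemma shape_comp {f g : PMap A} {u₁ v₁ u₂ v₂ : List A}
    (hf : Shape T f u₁ v₁) (hg : Shape T g u₂ v₂) :
    ∃ u v, Shape T (pcomp f g) u v := by
  by_cases hle : v₁.length ≤ u₂.length
  · refine ⟨u₁ ++ u₂.drop v₁.length, v₂, fun x y h => ?_⟩
    obtain ⟨m, hm, hfm⟩ := pcomp_some h
    obtain ⟨hpre₂, hm', hcore₂⟩ := hg x m hm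
    obtain ⟨hpre₁, hy, hcore₁⟩ := hf m y hfm
    refine ⟨hpre₂, ?_, hcore₂⟩
    rw [hy, hm', List.drop_append, Nat.sub_eq_zero_of_le hle,
      List.drop_zero, List.append_assoc]
  · push_neg at hle
    refine ⟨u₁, v₂ ++ v₁.drop u₂.length, fun x y h => ?_⟩
    obtain ⟨m, hm, hfm⟩ := pcomp_some h
    obtain ⟨hpre₂, hm', hcore₂⟩ := hg x m hm
    obtain ⟨hpre₁, hy, hcore₁⟩ := hf m y hfm
    rw [hm'] at hpre₁
    have hdp : v₁.drop u₂.length <+: x.drop v₂.length := by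
      have h2 := hpre₁.drop u₂.length
      rwa [List.drop_left] at h2
    have hxeq : x = v₂ ++ x.drop v₂.length := by
      nth_rewrite 1 [← List.take_append_drop v₂.length x]
      rw [← List.prefix_iff_eq_take.mp hpre₂]
    have key : x.drop (v₂ ++ v₁.drop u₂.length).length = m.drop v₁.length := by
      rw [hm', List.drop_append,
        List.drop_eq_nil_of_le (le_of_lt hle), List.nil_append,
        List.length_append, List.length_drop, List.drop_drop, Nat.add_comm]
    refine ⟨?_, by rw [hy, ← key], key ▸ hcore₁⟩
    obtain ⟨t, ht⟩ := hdp
    refine ⟨t, ?_⟩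
    rw [List.append_assoc, ht, ← hxeq]

lemma shape_inv {f : PMap A} {u v : List A} (hf : Shape T f u v) : Shape T (pinv f) v u := by
  intro y x h
  have hfx := pinv_some h
  obtain ⟨hpre, hy, hcore⟩ := hf x y hfx
  have hyd : y.drop u.length = x.drop v.length := by rw [hy, List.drop_left]
  refine ⟨by rw [hy]; exact List.prefix_append u _, ?_, hyd ▸ hcore⟩
  rw [hyd]
  nth_rewrite 1 [← List.take_append_drop v.length x]
  rw [← List.prefix_iff_eq_take.mp hpre]

lemma hull_shape {f : PMap A} (hf : Hull T f) : ∃ u v, Shape T f u v := by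
  induction hf with
  | @gen w hw =>
    refine ⟨w, [], fun x y h => ?_⟩
    obtain ⟨hy, hx, -⟩ := theta_some h
    exact ⟨List.nil_prefix, by simpa using hy, by simpa using hx⟩
  | zero => exact ⟨[], [], fun x y h => absurd h (by simp [pzero])⟩
  | comp hf hg ihf ihg =>
    obtain ⟨u₁, v₁, hf'⟩ := ihf
    obtain ⟨u₂, v₂, hg'⟩ := ihg
    exact shape_comp hf' hg'
  | inv hf ihf =>
    obtain ⟨u, v, hf'⟩ := ihf
    exact ⟨v, u, shape_inv hf'⟩

lemma exists_singleton_dom (l : List A) (hl : prodIdems T l ≠ pzero) :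
    ∃ c : A, prodIdems T l [c] = some [c] := by
  have hx' : ∃ x, prodIdems T l x ≠ none := by
    by_contra hcon
    push_neg at hcon
    exact hl (funext fun x => hcon x)
  obtain ⟨x, hx⟩ := hx'
  rw [prodIdems_apply] at hx
  have hcond : IsWord T x ∧ ∀ a ∈ l, IsWord T (a :: x) := by
    by_contra hc
    rw [if_neg hc] at hx
    exact hx rfl
  obtain ⟨⟨hne, hch⟩, hall⟩ := hcond
  obtain ⟨c, t, rfl⟩ := List.exists_cons_of_ne_nil hne
  refine ⟨c, ?_⟩
  rw [prodIdems_apply, if_pos]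
  refine ⟨⟨by simp, List.isChain_singleton c⟩, fun a ha => ⟨by simp, ?_⟩⟩
  have := (hall a ha).2
  unfold List.Chain' at this ⊢
  rw [List.isChain_cons_cons] at this ⊢
  exact ⟨this.1, List.isChain_singleton c⟩

end Stmt11Aux

/-- `D`-equivalent elements of `O↑ − O` are equal. -/
theorem stmt11 {A : Type} [Fintype A] (T : A → A → Prop) (hT : ∀ a : A, ∃ b : A, T a b)
    (xs ys : List A) (hxs : xs ≠ []) (hys : ys ≠ [])
    (hx : prodIdems T xs ≠ pzero) (hy : prodIdems T ys ≠ pzero)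
    (hD : ∃ γ : PMap A, Hull T γ ∧ pcomp γ (pinv γ) = prodIdems T xs ∧
            pcomp (pinv γ) γ = prodIdems T ys) :
    prodIdems T xs = prodIdems T ys := by
  obtain ⟨γ, hγ, hα, hβ⟩ := hD
  obtain ⟨u, v, hS⟩ := hull_shape hγ
  -- v = []
  obtain ⟨c, hc⟩ := exists_singleton_dom ys hy
  have hβc : pcomp (pinv γ) γ [c] = some [c] := by rw [hβ]; exact hc
  obtain ⟨m, hm, -⟩ := pcomp_some hβc
  obtain ⟨hpre, -, hcore⟩ := hS [c] m hm
  have hv : v = [] := by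
    cases v with
    | nil => rfl
    | cons d v' =>
      exfalso
      have hlen : (d :: v').length ≤ 1 := by simpa using hpre.length_le
      have : v' = [] := by
        cases v' with
        | nil => rfl
        | cons _ _ => simp at hlen
      subst this
      simp [IsWord] at hcore
  -- u = []
  obtain ⟨c', hc'⟩ := exists_singleton_dom xs hx
  have hαc : pcomp γ (pinv γ) [c'] = some [c'] := by rw [hα]; exact hc'
  obtain ⟨z, hz, hgz⟩ := pcomp_some hαc
  obtain ⟨-, hzy, hzcore⟩ := hS z [c'] hgz
  have hu : u = [] := by
    cases u with
    | nil => rfl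
    | cons e u' =>
      exfalso
      rw [List.cons_append] at hzy
      injection hzy with h4 h5
      exact hzcore.1 (List.append_eq_nil_iff.mp h5.symm).2
  subst hu; subst hv
  -- γ is a partial identity
  have hid : ∀ x y, γ x = some y → y = x := by
    intro x y h
    obtain ⟨-, hy, -⟩ := hS x y h
    simpa using hy
  funext x
  rw [← hα, ← hβ]
  unfold pcomp
  cases hgx : γ x with
  | none =>
    rw [pbind_none]
    cases hpx : pinv γ x with
    | none => rw [pbind_none]
    | some z =>
      have hz2 := pinv_some hpx
      have hxz : x = z := hid z x hz2
      rw [← hxz, hgx] at hz2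
      exact absurd hz2 (by simp)
  | some m =>
    have hmx : m = x := hid x m hgx
    subst hmx
    obtain ⟨z, hz, hgz⟩ := pinv_def hgx
    have hzm : m = z := hid z m hgz
    rw [← hzm] at hz
    rw [hz]
    show γ m = pinv γ m
    rw [hgx, hz]
end

section
/- For each a ∈ A, θ_a θ_a^{-1} is D-equivalent to θ_a^{-1} θ_a, and θ_a^{-1} θ_a is a nonzero element of O↑ − O; moreover θ_a^{-1}θ_a is the unique element of O↑ − O that is D-equivalent to θ_a θ_a^{-1}. -/
namespace S12
variable {A : Type} {T : A → A → Prop}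

def ok (T : A → A → Prop) (u : List A) (b : A) : Prop := List.Chain' T (u ++ [b])

lemma word_append (u : List A) (b : A) (l : List A) :
    IsWord T (u ++ b :: l) ↔ IsWord T (b :: l) ∧ ok T u b := by
  simp [IsWord, ok, List.Chain', List.isChain_append]
  tauto

open Classical in
noncomputable def gam (T : A → A → Prop) (u v : List A) (H : A → Prop) : PMap A := fun x =>
  if h : ∃ b l, x = v ++ b :: l ∧ IsWord T (b :: l) ∧ H b then some (u ++ x.drop v.length)
  else none

def Good (T : A → A → Prop) (u v : List A) (H : A → Prop) : Prop :=
  ∀ b, H b → ok T u b ∧ ok T v b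

lemma gam_apply (u v : List A) (H : A → Prop) (b : A) (l : List A)
    (hw : IsWord T (b :: l)) (hb : H b) :
    gam T u v H (v ++ b :: l) = some (u ++ b :: l) := by
  rw [gam, dif_pos ⟨b, l, rfl, hw, hb⟩, List.drop_left]

lemma gam_eq_some_iff {u v : List A} {H : A → Prop} {x y : List A} :
    gam T u v H x = some y ↔
      ∃ b l, x = v ++ b :: l ∧ IsWord T (b :: l) ∧ H b ∧ y = u ++ b :: l := by
  constructor
  · intro h
    rw [gam] at h
    split_ifs at h with hc
    · obtain ⟨b, l, rfl, hw, hb⟩ := hc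
      refine ⟨b, l, rfl, hw, hb, ?_⟩
      rw [List.drop_left] at h
      exact (Option.some_injective _ h).symm
  · rintro ⟨b, l, rfl, hw, hb, rfl⟩
    exact gam_apply u v H b l hw hb

lemma gam_eq_none_iff {u v : List A} {H : A → Prop} {x : List A} :
    gam T u v H x = none ↔ ¬ ∃ b l, x = v ++ b :: l ∧ IsWord T (b :: l) ∧ H b := by
  rw [gam]
  split_ifs with hc <;> simp [hc]

lemma gam_congr {u v : List A} {H H' : A → Prop} (h : ∀ b, H b ↔ H' b) :
    gam T u v H = gam T u v H' := by
  have : H = H' := funext fun b => propext (h b)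
  rw [this]

lemma theta_eq_gam (w : List A) (hw : IsWord T w) :
    theta T w = gam T w [] (ok T w) := by
  funext x
  rw [theta, gam]
  rcases x with _ | ⟨b, l⟩
  · simp [IsWord]
  · by_cases h : IsWord T (b :: l) ∧ IsWord T (w ++ b :: l)
    · rw [if_pos h, dif_pos ⟨b, l, rfl, h.1, ((word_append w b l).mp h.2).2⟩]
      simp
    · rw [if_neg h, dif_neg]
      rintro ⟨b', l', he, hw', hb'⟩
      simp only [List.nil_append] at he
      cases he
      exact h ⟨hw', (word_append w b l).mpr ⟨hw', hb'⟩⟩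

lemma pinv_gam (u v : List A) (H : A → Prop) :
    pinv (gam T u v H) = gam T v u H := by
  funext y
  rw [pinv]
  split_ifs with h
  · obtain ⟨b, l, hx, hw, hb, hy⟩ := gam_eq_some_iff.mp h.choose_spec
    subst hy
    rw [gam_apply v u H b l hw hb, hx]
  · symm
    rw [gam_eq_none_iff]
    rintro ⟨b, l, rfl, hw, hb⟩
    exact h ⟨v ++ b :: l, gam_apply u v H b l hw hb⟩

lemma pinv_pzero : pinv (pzero : PMap A) = pzero := by
  funext y
  rw [pinv, dif_neg]
  · rfl
  · rintro ⟨x, hx⟩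
    exact Option.some_ne_none _ hx.symm

lemma pcomp_pzero_left (f : PMap A) : pcomp pzero f = pzero := by
  funext x
  rw [pcomp]
  cases f x <;> rfl

lemma pcomp_pzero_right (f : PMap A) : pcomp f pzero = pzero := rfl

end S12

namespace S12
variable {A : Type} {T : A → A → Prop}

lemma ext_some {f g : PMap A} (h : ∀ x y, f x = some y ↔ g x = some y) : f = g := by
  funext x
  cases hf : f x with
  | some y => exact ((h x y).mp hf).symm
  | none =>
    cases hg : g x with
    | some y => exact absurd ((h x y).mpr hg) (by simp [hf])
    | none => rfl

lemma pcomp_some_iff {f g : PMap A} {x y : List A} :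
    pcomp f g x = some y ↔ ∃ z, g x = some z ∧ f z = some y := by
  rw [pcomp]
  cases g x <;> simp [Option.bind]

lemma eq_pzero (f : PMap A) (h : ∀ x y, f x ≠ some y) : f = pzero := by
  funext x
  cases hf : f x with
  | some y => exact absurd hf (h x y)
  | none => rfl

lemma comp_eq (u v v' : List A) (H H' : A → Prop) :
    pcomp (gam T u v H) (gam T v v' H') = gam T u v' (fun b => H b ∧ H' b) := by
  apply ext_some
  intro x y
  rw [pcomp_some_iff]
  constructor
  · rintro ⟨z, hz, hy⟩
    obtain ⟨b, l, rfl, hw, hb, rfl⟩ := gam_eq_some_iff.mp hz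
    obtain ⟨b2, l2, he, hw2, hb2, rfl⟩ := gam_eq_some_iff.mp hy
    obtain ⟨rfl, rfl⟩ : b2 = b ∧ l2 = l := by
      have := List.append_cancel_left he
      simp_all
    exact gam_eq_some_iff.mpr ⟨_, _, rfl, hw, ⟨hb2, hb⟩, rfl⟩
  · intro h
    obtain ⟨b, l, rfl, hw, ⟨hb, hb'⟩, rfl⟩ := gam_eq_some_iff.mp h
    exact ⟨v ++ b :: l, gam_apply _ _ _ _ _ hw hb', gam_apply _ _ _ _ _ hw hb⟩

lemma comp_left_pos (u v v' : List A) (c : A) (m : List A) (H H' : A → Prop) (hc : H c) :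
    pcomp (gam T u v H) (gam T (v ++ c :: m) v' H') =
      gam T (u ++ c :: m) v' (fun b => H' b ∧ ok T (c :: m) b) := by
  apply ext_some
  intro x y
  rw [pcomp_some_iff]
  constructor
  · rintro ⟨z, hz, hy⟩
    obtain ⟨b, l, rfl, hw, hb, rfl⟩ := gam_eq_some_iff.mp hz
    obtain ⟨b2, l2, he, hw2, hb2, rfl⟩ := gam_eq_some_iff.mp hy
    rw [List.append_assoc] at he
    have he2 : (c :: m) ++ b :: l = b2 :: l2 := List.append_cancel_left he
    have hok : ok T (c :: m) b := by
      rw [← he2] at hw2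
      exact ((word_append (c :: m) b l).mp hw2).2
    refine gam_eq_some_iff.mpr ⟨b, l, rfl, hw, ⟨hb, hok⟩, ?_⟩
    rw [← he2]
    simp
  · intro h
    obtain ⟨b, l, rfl, hw, ⟨hb, hok⟩, rfl⟩ := gam_eq_some_iff.mp h
    have hw2 : IsWord T ((c :: m) ++ b :: l) := (word_append (c :: m) b l).mpr ⟨hw, hok⟩
    refine ⟨(v ++ c :: m) ++ b :: l, gam_apply _ _ _ _ _ hw hb, ?_⟩
    have h1 : (v ++ c :: m) ++ b :: l = v ++ c :: (m ++ b :: l) := by simp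
    have h2 : (u ++ c :: m) ++ b :: l = u ++ c :: (m ++ b :: l) := by simp
    rw [h1, h2]
    refine gam_apply _ _ _ _ _ ?_ hc
    simpa using hw2

lemma comp_left_neg (u v v' : List A) (c : A) (m : List A) (H H' : A → Prop) (hc : ¬ H c) :
    pcomp (gam T u v H) (gam T (v ++ c :: m) v' H') = pzero := by
  apply eq_pzero
  intro x y h
  obtain ⟨z, hz, hy⟩ := pcomp_some_iff.mp h
  obtain ⟨b, l, rfl, hw, hb, rfl⟩ := gam_eq_some_iff.mp hz
  obtain ⟨b2, l2, he, hw2, hb2, rfl⟩ := gam_eq_some_iff.mp hy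
  rw [List.append_assoc] at he
  have he2 : (c :: m) ++ b :: l = b2 :: l2 := List.append_cancel_left he
  have : c = b2 := by
    have := he2
    simp only [List.cons_append] at this
    exact (List.cons.injEq _ _ _ _ ▸ this : _ ∧ _).1
  exact hc (this ▸ hb2)

lemma comp_right_pos (u u' v' : List A) (c : A) (m : List A) (H H' : A → Prop) (hc : H' c) :
    pcomp (gam T u (u' ++ c :: m) H) (gam T u' v' H') =
      gam T u (v' ++ c :: m) (fun b => H b ∧ ok T (c :: m) b) := by
  apply ext_some
  intro x y
  rw [pcomp_some_iff]
  constructor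
  · rintro ⟨z, hz, hy⟩
    obtain ⟨b, l, rfl, hw, hb, rfl⟩ := gam_eq_some_iff.mp hz
    obtain ⟨b2, l2, he, hw2, hb2, rfl⟩ := gam_eq_some_iff.mp hy
    rw [List.append_assoc] at he
    have he2 : b :: l = (c :: m) ++ b2 :: l2 := List.append_cancel_left he
    have hok : ok T (c :: m) b2 := by
      rw [he2] at hw
      exact ((word_append (c :: m) b2 l2).mp hw).2
    refine gam_eq_some_iff.mpr ⟨b2, l2, ?_, hw2, ⟨hb2, hok⟩, rfl⟩
    rw [he2]
    simp
  · intro h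
    obtain ⟨b, l, rfl, hw, ⟨hb, hok⟩, rfl⟩ := gam_eq_some_iff.mp h
    have hw2 : IsWord T ((c :: m) ++ b :: l) := (word_append (c :: m) b l).mpr ⟨hw, hok⟩
    have h1 : (v' ++ c :: m) ++ b :: l = v' ++ c :: (m ++ b :: l) := by simp
    have h2 : (u' ++ c :: m) ++ b :: l = u' ++ c :: (m ++ b :: l) := by simp
    refine ⟨u' ++ c :: (m ++ b :: l), ?_, ?_⟩
    · rw [h1]
      refine gam_apply _ _ _ _ _ ?_ hc
      simpa using hw2
    · have h3 : u' ++ c :: (m ++ b :: l) = (u' ++ c :: m) ++ b :: l := by simp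
      rw [h3]
      exact gam_apply _ _ _ _ _ hw hb

lemma comp_right_neg (u u' v' : List A) (c : A) (m : List A) (H H' : A → Prop) (hc : ¬ H' c) :
    pcomp (gam T u (u' ++ c :: m) H) (gam T u' v' H') = pzero := by
  apply eq_pzero
  intro x y h
  obtain ⟨z, hz, hy⟩ := pcomp_some_iff.mp h
  obtain ⟨b, l, rfl, hw, hb, rfl⟩ := gam_eq_some_iff.mp hz
  obtain ⟨b2, l2, he, hw2, hb2, rfl⟩ := gam_eq_some_iff.mp hy
  rw [List.append_assoc] at he
  have he2 : b :: l = (c :: m) ++ b2 :: l2 := List.append_cancel_left he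
  have : b = c := by
    simp only [List.cons_append] at he2
    exact (List.cons.injEq _ _ _ _ ▸ he2 : _ ∧ _).1
  exact hc (this ▸ hb)

lemma comp_incomp (u v u' v' : List A) (H H' : A → Prop)
    (h1 : ¬ v <+: u') (h2 : ¬ u' <+: v) :
    pcomp (gam T u v H) (gam T u' v' H') = pzero := by
  apply eq_pzero
  intro x y h
  obtain ⟨z, hz, hy⟩ := pcomp_some_iff.mp h
  obtain ⟨b, l, rfl, hw, hb, rfl⟩ := gam_eq_some_iff.mp hz
  obtain ⟨b2, l2, he, hw2, hb2, rfl⟩ := gam_eq_some_iff.mp hy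
  have p1 : u' <+: u' ++ b :: l := ⟨b :: l, rfl⟩
  have p2 : v <+: u' ++ b :: l := ⟨b2 :: l2, he.symm⟩
  rcases List.prefix_or_prefix_of_prefix p2 p1 with h | h
  · exact h1 h
  · exact h2 h

end S12

namespace S12
variable {A : Type} {T : A → A → Prop}

def NF (T : A → A → Prop) (f : PMap A) : Prop :=
  f = pzero ∨ ∃ u v H, Good T u v H ∧ f = gam T u v H

lemma good_theta (w : List A) : Good T w [] (ok T w) :=
  fun b hb => ⟨hb, List.isChain_singleton b⟩

lemma ok_glue {u m : List A} {c b : A} (h1 : ok T u c) (h2 : ok T (c :: m) b) :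
    ok T (u ++ c :: m) b := by
  rw [ok, List.append_assoc]
  unfold List.Chain'
  rw [List.isChain_append]
  rw [ok] at h1
  unfold List.Chain' at h1
  rw [List.isChain_append] at h1
  refine ⟨h1.1, h2, ?_⟩
  intro x hx y hy
  simp only [List.cons_append, List.head?_cons, Option.mem_def, Option.some.injEq] at hy
  subst hy
  exact h1.2.2 x hx c (by simp)

lemma nf_inv {f : PMap A} (h : NF T f) : NF T (pinv f) := by
  rcases h with rfl | ⟨u, v, H, hg, rfl⟩
  · left; exact pinv_pzero
  · right
    exact ⟨v, u, H, fun b hb => ⟨(hg b hb).2, (hg b hb).1⟩, pinv_gam u v H⟩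

lemma nf_comp {f g : PMap A} (hf : NF T f) (hg : NF T g) : NF T (pcomp f g) := by
  rcases hf with rfl | ⟨u, v, H, hGf, rfl⟩
  · left; exact pcomp_pzero_left g
  rcases hg with rfl | ⟨u', v', H', hGg, rfl⟩
  · left; exact pcomp_pzero_right _
  by_cases hp : v <+: u'
  · obtain ⟨s, rfl⟩ := hp
    cases s with
    | nil =>
      right
      rw [List.append_nil, comp_eq]
      exact ⟨u, v', _, fun b hb => ⟨(hGf b hb.1).1, (hGg b hb.2).2⟩, rfl⟩
    | cons c m =>
      by_cases hc : H c
      · right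
        rw [comp_left_pos u v v' c m H H' hc]
        refine ⟨u ++ c :: m, v', _, fun b hb => ⟨?_, (hGg b hb.1).2⟩, rfl⟩
        exact ok_glue (hGf c hc).1 hb.2
      · left; exact comp_left_neg u v v' c m H H' hc
  by_cases hp2 : u' <+: v
  · obtain ⟨s, rfl⟩ := hp2
    cases s with
    | nil => exact absurd (by simp) hp
    | cons c m =>
      by_cases hc : H' c
      · right
        rw [comp_right_pos u u' v' c m H H' hc]
        refine ⟨u, v' ++ c :: m, _, fun b hb => ⟨(hGf b hb.1).1, ?_⟩, rfl⟩
        exact ok_glue (hGg c hc).2 hb.2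
      · left; exact comp_right_neg u u' v' c m H H' hc
  left
  exact comp_incomp u v u' v' H H' hp hp2

lemma hull_nf {f : PMap A} (h : Hull T f) : NF T f := by
  induction h with
  | gen hw => exact Or.inr ⟨_, _, _, good_theta _, theta_eq_gam _ hw⟩
  | zero => exact Or.inl rfl
  | comp _ _ ihf ihg => exact nf_comp ihf ihg
  | inv _ ihf => exact nf_inv ihf

lemma word_single (a : A) : IsWord T [a] := ⟨by simp, List.isChain_singleton a⟩

lemma ok_single {a b : A} : ok T [a] b ↔ T a b := by
  simp [ok, List.Chain', List.isChain_pair]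

lemma idemL_eq (a : A) : idemL T a = gam T [] [] (ok T [a]) := by
  rw [idemL, theta_eq_gam [a] (word_single a), pinv_gam]
  rw [comp_eq [] [a] [] (ok T [a]) (ok T [a])]
  exact gam_congr fun b => and_self_iff

lemma rgIdem_eq (a : A) : rgIdem T a = gam T [a] [a] (ok T [a]) := by
  rw [rgIdem, theta_eq_gam [a] (word_single a), pinv_gam]
  rw [comp_eq [a] [] [a] (ok T [a]) (ok T [a])]
  exact gam_congr fun b => and_self_iff

lemma rg_apply {a c : A} (hac : T a c) : rgIdem T a [a, c] = some [a, c] := by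
  rw [rgIdem_eq]
  have := gam_apply (T := T) [a] [a] (ok T [a]) c [] (word_single c) (ok_single.mpr hac)
  simpa using this

lemma gam_short (u : List A) (H : A → Prop) (d : A) (vs : List A) (x : List A)
    (hx : x.length ≤ (d :: vs).length) : gam T u (d :: vs) H x = none := by
  rw [gam, dif_neg]
  rintro ⟨b, l, rfl, -, -⟩
  simp at hx

end S12

open S12

/-- `θ_a θ_a⁻¹ D θ_a⁻¹ θ_a`, with `θ_a⁻¹ θ_a` a nonzero element of `O↑ − O`,
and `θ_a⁻¹ θ_a` is the unique element of `O↑ − O` that is `D`-equivalent to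
`θ_a θ_a⁻¹`. -/
theorem stmt12 {A : Type} [Fintype A] (T : A → A → Prop) (hT : ∀ a : A, ∃ b : A, T a b)
    (a : A) :
    (∃ γ : PMap A, Hull T γ ∧ pcomp γ (pinv γ) = rgIdem T a ∧
        pcomp (pinv γ) γ = idemL T a) ∧
    idemL T a ≠ pzero ∧
    (∃ b : A, pcomp (idemL T a) (rgIdem T b) = rgIdem T b ∧ idemL T a ≠ rgIdem T b) ∧
    (∀ g : PMap A, Hull T g → pcomp g g = g →
      (∃ b : A, pcomp g (rgIdem T b) = rgIdem T b) → (∀ b : A, g ≠ rgIdem T b) →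
      (∃ γ : PMap A, Hull T γ ∧ pcomp γ (pinv γ) = rgIdem T a ∧ pcomp (pinv γ) γ = g) →
      g = idemL T a) := by
  obtain ⟨c, hac⟩ := hT a
  have hidem : idemL T a = gam T [] [] (ok T [a]) := idemL_eq a
  have hidemc : idemL T a [c] = some [c] := by
    rw [hidem]
    have := gam_apply (T := T) [] [] (ok T [a]) c [] (word_single c) (ok_single.mpr hac)
    simpa using this
  refine ⟨⟨theta T [a], Hull.gen (word_single a), rfl, rfl⟩, ?_, ?_, ?_⟩
  · -- idemL ≠ pzero
    intro h
    rw [h] at hidemc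
    exact Option.some_ne_none _ hidemc.symm
  · -- above some rgIdem c, but ≠ it
    refine ⟨c, ?_, ?_⟩
    · rw [hidem, rgIdem_eq]
      have h2 := comp_left_pos (T := T) [] [] [c] c [] (ok T [a]) (ok T [c])
        (ok_single.mpr hac)
      simp only [List.nil_append] at h2
      rw [h2]
      exact gam_congr fun b => ⟨fun hb => hb.1, fun hb => ⟨hb, hb⟩⟩
    · intro h
      rw [h, rgIdem_eq] at hidemc
      rw [gam_short _ _ _ _ _ (by simp)] at hidemc
      exact Option.some_ne_none _ hidemc.symm
  · -- uniqueness
    rintro g _ _ ⟨b, hgb⟩ hgO ⟨γ, hγ, hγ1, hγ2⟩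
    rcases hull_nf hγ with rfl | ⟨u, v, H, hGood, rfl⟩
    · rw [pinv_pzero, pcomp_pzero_left] at hγ1
      have hv := congrFun hγ1 [a, c]
      rw [rg_apply hac] at hv
      exact (Option.some_ne_none _ hv.symm).elim
    rw [pinv_gam] at hγ1 hγ2
    rw [comp_eq u v u H H, rgIdem_eq] at hγ1
    rw [comp_eq v u v H H] at hγ2
    -- show u = [a]
    have hval := congrFun hγ1 ([a] ++ [c])
    rw [gam_apply [a] [a] (ok T [a]) c [] (word_single c) (ok_single.mpr hac)] at hval
    obtain ⟨b1, l1, he, hw1, hH1, -⟩ := gam_eq_some_iff.mp hval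
    rcases u with - | ⟨d, - | ⟨d2, u3⟩⟩
    · -- u = [] : contradiction
      exfalso
      obtain ⟨rfl, -⟩ : a = b1 ∧ ([c] : List A) = l1 := by simpa using he
      have hL := congrFun hγ1 [a]
      have hsome : gam T [] [] (fun b => H b ∧ H b) [a] = some [a] := by
        have := gam_apply (T := T) [] [] (fun b => H b ∧ H b) a [] (word_single a)
          ⟨hH1.1, hH1.1⟩
        simpa using this
      rw [hsome, gam_short _ _ _ _ _ (by simp)] at hL
      exact Option.some_ne_none _ hL
    · -- u = [d] : derive d = a
      obtain ⟨rfl, -, -⟩ : a = d ∧ c = b1 ∧ ([] : List A) = l1 := by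
        simpa using he
      -- now u = [a]
      have hH : ∀ x, H x ↔ T a x := by
        intro x
        constructor
        · intro hx
          have hv := congrFun hγ1 ([a] ++ [x])
          rw [gam_apply [a] [a] (fun b => H b ∧ H b) x [] (word_single x) ⟨hx, hx⟩] at hv
          obtain ⟨b2, l2, he3, -, hH3, -⟩ := gam_eq_some_iff.mp hv.symm
          obtain ⟨rfl, -⟩ : x = b2 ∧ ([] : List A) = l2 := by
            simpa using List.append_cancel_left he3
          exact ok_single.mp hH3
        · intro hx
          have hv := congrFun hγ1 ([a] ++ [x])
          rw [gam_apply [a] [a] (ok T [a]) x [] (word_single x) (ok_single.mpr hx)] at hv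
          obtain ⟨b2, l2, he3, -, hH3, -⟩ := gam_eq_some_iff.mp hv
          obtain ⟨rfl, -⟩ : x = b2 ∧ ([] : List A) = l2 := by
            simpa using List.append_cancel_left he3
          exact hH3.1
      -- now case on v
      obtain ⟨x, hbx⟩ := hT b
      have hrgb : gam T [b] [b] (ok T [b]) ([b] ++ [x]) = some ([b] ++ [x]) :=
        gam_apply [b] [b] (ok T [b]) x [] (word_single x) (ok_single.mpr hbx)
      rcases v with - | ⟨c0, m0⟩
      · rw [← hγ2, hidem]
        exact gam_congr fun y =>
          ⟨fun hy => ok_single.mpr ((hH y).mp hy.1),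
           fun hy => ⟨(hH y).mpr (ok_single.mp hy), (hH y).mpr (ok_single.mp hy)⟩⟩
      · exfalso
        rw [← hγ2, rgIdem_eq] at hgb
        by_cases hc0 : c0 = b
        · obtain rfl := hc0
          rcases m0 with - | ⟨c1, m1⟩
          · -- v = [c0] = [b]
            rw [comp_eq [c0] [c0] [c0] _ _] at hgb
            apply hgO c0
            rw [← hγ2, rgIdem_eq]
            apply gam_congr
            intro y
            constructor
            · rintro ⟨hy, -⟩
              exact (hGood y hy).2
            · intro hy
              have hv := congrFun hgb ([c0] ++ [y])
              rw [gam_apply [c0] [c0] (ok T [c0]) y [] (word_single y) hy] at hv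
              obtain ⟨b2, l2, he3, -, hH3, -⟩ := gam_eq_some_iff.mp hv
              obtain ⟨rfl, -⟩ : y = b2 ∧ ([] : List A) = l2 := by
                simpa using List.append_cancel_left he3
              exact hH3.1
          · -- v = c0 :: c1 :: m1, c0 = b
            by_cases hc1 : ok T [c0] c1
            · have h5 := comp_right_pos (T := T) (c0 :: c1 :: m1) [c0] [c0] c1 m1
                (fun z => H z ∧ H z) (ok T [c0]) hc1
              simp only [List.cons_append, List.nil_append] at h5
              rw [h5] at hgb
              have hv := congrFun hgb ([c0] ++ [x])
              rw [hrgb, gam_short _ _ _ _ _ (by simp)] at hv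
              exact Option.some_ne_none _ hv.symm
            · have h5 := comp_right_neg (T := T) (c0 :: c1 :: m1) [c0] [c0] c1 m1
                (fun z => H z ∧ H z) (ok T [c0]) hc1
              simp only [List.cons_append, List.nil_append] at h5
              rw [h5] at hgb
              have hv := congrFun hgb ([c0] ++ [x])
              rw [hrgb] at hv
              exact Option.some_ne_none _ hv.symm
        · -- c0 ≠ b : incomparable
          have h1 : ¬ (c0 :: m0) <+: [b] := by
            rintro ⟨t, ht⟩
            simp only [List.cons_append, List.cons.injEq] at ht
            exact hc0 ht.1
          have h2 : ¬ ([b] : List A) <+: (c0 :: m0) := by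
            rintro ⟨t, ht⟩
            simp only [List.cons_append, List.nil_append, List.cons.injEq] at ht
            exact hc0 ht.1.symm
          rw [comp_incomp _ _ _ _ _ _ h1 h2] at hgb
          have hv := congrFun hgb ([b] ++ [x])
          rw [hrgb] at hv
          exact Option.some_ne_none _ hv.symm
    · -- u too long : contradiction
      exfalso
      have hlen := congrArg List.length he
      simp [List.length_append] at hlen
end
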